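/- arXiv:2409.01292 — 4 statements merged into one kernel-verified Lean document; each statement's English description precedes it below -/
import Mathlib

section
/- Let (X,d,μ) be a metric measure space with 0 < μ(B(x,r)) < ∞ for all x, r, and 1 < p < ∞, θ > 0. Suppose the Besov space B^θ_{p,p}(X) is a finite-dimensional vector space (of dimension k ∈ ℕ). Then every function in B^θ_{p,p}(X) is essentially bounded. (Proof idea: an unbounded nonnegative f yields infinitely many linearly independent truncations f_i = max{f - n_i, 0}.) -/
open MeasureTheory Metric Filter ENNReal Topology

noncomputable def besovEnergy {X : Type*} [MetricSpace X] [MeasurableSpace X]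
    (μ : Measure X) (p θ : ℝ) (u : X → ℝ) : ℝ≥0∞ :=
  ∫⁻ x, ∫⁻ y, ENNReal.ofReal (|u x - u y| ^ p) /
    (ENNReal.ofReal (dist x y ^ (θ * p)) * μ (ball x (dist x y))) ∂μ ∂μ

noncomputable def ballEnergy {X : Type*} [MetricSpace X] [MeasurableSpace X]
    (μ : Measure X) (p θ : ℝ) (u : X → ℝ) (t : ℝ) : ℝ≥0∞ :=
  ∫⁻ x, (∫⁻ y in ball x t, ENNReal.ofReal (|u x - u y| ^ p) ∂μ) /
    (μ (ball x t) * ENNReal.ofReal (t ^ (θ * p))) ∂μ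

noncomputable def ksEnergy {X : Type*} [MetricSpace X] [MeasurableSpace X]
    (μ : Measure X) (p θ : ℝ) (u : X → ℝ) : ℝ≥0∞ :=
  Filter.limsup (ballEnergy μ p θ u) (𝓝[>] (0:ℝ))

noncomputable def binfEnergy {X : Type*} [MetricSpace X] [MeasurableSpace X]
    (μ : Measure X) (p θ : ℝ) (u : X → ℝ) : ℝ≥0∞ :=
  ⨆ t : Set.Ioi (0:ℝ), ballEnergy μ p θ u t

/-- The doubling property together with positivity and finiteness of the measure of balls. -/
def IsDoublingMeas {X : Type*} [MetricSpace X] [MeasurableSpace X] (μ : Measure X) : Prop :=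
  ∃ C : ℝ≥0∞, C < ⊤ ∧ ∀ x : X, ∀ r : ℝ, 0 < r →
    μ (ball x (2 * r)) ≤ C * μ (ball x r) ∧ 0 < μ (ball x r) ∧ μ (ball x r) < ⊤

/-- Membership in the Besov space `B^θ_{p,p}(X)`. -/
def MemBesov {X : Type*} [MetricSpace X] [MeasurableSpace X]
    (μ : Measure X) (p θ : ℝ) (u : X → ℝ) : Prop :=
  MemLp u (ENNReal.ofReal p) μ ∧ besovEnergy μ p θ u < ⊤

section aux
variable {X : Type*} [MetricSpace X] [MeasurableSpace X] {μ : Measure X}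

lemma exists_mem_of_ae' {S : Set X} (hS : μ S ≠ 0) {P : X → Prop}
    (hP : ∀ᵐ x ∂μ, P x) : ∃ x ∈ S, P x := by
  by_contra h
  push_neg at h
  exact hS (measure_mono_null (fun x hx => h x hx) (ae_iff.mp hP))

lemma memBesov_trunc' {p θ : ℝ} (hp : 1 < p) {f : X → ℝ}
    (hf : MemBesov μ p θ f) {a : ℝ} (ha : 0 ≤ a) :
    MemBesov μ p θ (fun x => max (|f x| - a) 0) := by
  constructor
  · have hmeas : AEStronglyMeasurable (fun x => max (|f x| - a) 0) μ :=
      ((continuous_abs.sub continuous_const).max continuous_const).comp_aestronglyMeasurable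
        hf.1.aestronglyMeasurable
    refine MemLp.of_le hf.1 hmeas (Filter.Eventually.of_forall fun x => ?_)
    simp only [Real.norm_eq_abs]
    rw [abs_of_nonneg (le_max_right _ _)]
    exact max_le (by linarith [abs_nonneg (f x)]) (abs_nonneg _)
  · refine lt_of_le_of_lt ?_ hf.2
    unfold besovEnergy
    refine lintegral_mono fun x => lintegral_mono fun y => ?_
    refine ENNReal.div_le_div_right (ENNReal.ofReal_le_ofReal ?_) _
    refine Real.rpow_le_rpow (abs_nonneg _) ?_ (by linarith)
    calc |max (|f x| - a) 0 - max (|f y| - a) 0|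
        ≤ |(|f x| - a) - (|f y| - a)| := abs_max_sub_max_le_abs _ _ _
      _ ≤ |f x - f y| := by
          rw [sub_sub_sub_cancel_right]; exact abs_abs_sub_abs_le_abs_sub _ _

lemma coeFn_sum_smul' {ι : Type*} (s : Finset ι) {q : ℝ≥0∞}
    (g : ι → ℝ) (e : ι → Lp ℝ q μ) :
    (↑(∑ i ∈ s, g i • e i) : X → ℝ) =ᵐ[μ] fun x => ∑ i ∈ s, g i * (e i : X → ℝ) x := by
  classical
  induction s using Finset.induction_on with
  | empty => simp only [Finset.sum_empty]; exact Lp.coeFn_zero ℝ q μ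
  | insert j s' hj ih =>
    rw [Finset.sum_insert hj]
    filter_upwards [Lp.coeFn_add (g j • e j) (∑ i ∈ s', g i • e i),
      Lp.coeFn_smul (g j) (e j), ih] with x h1 h2 h3
    simp only [Finset.sum_insert hj]
    rw [h1, Pi.add_apply, h2, h3]
    simp [smul_eq_mul]

end aux

/-- If the Besov space `B^θ_{p,p}(X)` is spanned (up to `μ`-a.e. equality) by finitely many
functions, then every function in `B^θ_{p,p}(X)` is essentially bounded. -/
theorem statement8 {X : Type*} [MetricSpace X] [MeasurableSpace X]
    (μ : Measure X) (hball : ∀ (x : X) (r : ℝ), 0 < r → 0 < μ (ball x r) ∧ μ (ball x r) < ⊤)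
    (p θ : ℝ) (hp : 1 < p) (hθ : 0 < θ)
    (k : ℕ) (b : Fin k → X → ℝ) (hb : ∀ i, MemBesov μ p θ (b i))
    (hspan : ∀ f : X → ℝ, MemBesov μ p θ f →
      ∃ c : Fin k → ℝ, f =ᵐ[μ] fun x => ∑ i, c i * b i x) :
    ∀ f : X → ℝ, MemBesov μ p θ f → ∃ M : ℝ, ∀ᵐ x ∂μ, |f x| ≤ M := by
  intro f hf
  by_contra hM
  push_neg at hM
  -- for every level `r` there is a higher level `r'` trapping positive measure
  have key : ∀ r : ℝ, ∃ r', r < r' ∧ 0 < μ {x | r < |f x| ∧ |f x| ≤ r'} := by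
    intro r
    have h0 : μ {x | r < |f x|} ≠ 0 := by
      intro h0
      refine hM r ?_
      rw [ae_iff]
      convert h0 using 2
      ext x
      simp [not_le]
    have hsub : {x | r < |f x|} ⊆ ⋃ n : ℕ, {x | r < |f x| ∧ |f x| ≤ r + (n + 1)} := by
      intro x hx
      obtain ⟨n, hn⟩ := exists_nat_gt (|f x| - r)
      exact Set.mem_iUnion.2 ⟨n, hx, by push_cast; linarith⟩
    by_contra hcon
    push_neg at hcon
    refine h0 (le_antisymm ?_ zero_le)
    refine le_trans (measure_mono hsub) (le_of_eq (measure_iUnion_null fun n => ?_))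
    have := hcon (r + (n + 1)) (lt_add_of_pos_right r (by positivity))
    exact le_antisymm (by simpa using this) zero_le
  choose next hnext1 hnext2 using key
  -- increasing sequence of levels
  set a : ℕ → ℝ := fun n => Nat.rec 0 (fun _ prev => next prev) n with ha
  have hstep : ∀ n, a (n + 1) = next (a n) := fun n => rfl
  have hmono : StrictMono a := strictMono_nat_of_lt_succ fun n => by
    rw [hstep]; exact hnext1 (a n)
  have hannn : ∀ n, 0 ≤ a n := fun n => by
    have : a 0 ≤ a n := hmono.monotone (Nat.zero_le n)
    exact this
  -- truncations
  set h : ℕ → X → ℝ := fun j x => max (|f x| - a j) 0 with hh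
  have hmemh : ∀ j : ℕ, MemBesov μ p θ (h j) := fun j => memBesov_trunc' hp hf (hannn j)
  haveI : Fact (1 ≤ ENNReal.ofReal p) := ⟨ENNReal.one_le_ofReal.mpr hp.le⟩
  set q := ENNReal.ofReal p with hq
  let e : Fin (k + 1) → Lp ℝ q μ := fun j => (hmemh j).1.toLp (h j)
  let B : Fin k → Lp ℝ q μ := fun i => (hb i).1.toLp (b i)
  have hcoeE : ∀ j : Fin (k + 1), (e j : X → ℝ) =ᵐ[μ] h j := fun j => (hmemh j).1.coeFn_toLp
  have hcoeB : ∀ i : Fin k, (B i : X → ℝ) =ᵐ[μ] b i := fun i => (hb i).1.coeFn_toLp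
  -- each truncation lies in the span of the `B i`
  have hmem : ∀ j : Fin (k + 1), e j ∈ Submodule.span ℝ (Set.range B) := by
    intro j
    obtain ⟨c, hc⟩ := hspan (h j) (hmemh j)
    have heq : e j = ∑ i, c i • B i := by
      have h1 : ((∑ i, c i • B i : Lp ℝ q μ) : X → ℝ)
          =ᵐ[μ] fun x => ∑ i, c i * (B i : X → ℝ) x := coeFn_sum_smul' Finset.univ c B
      have h2 : (fun x => ∑ i, c i * (B i : X → ℝ) x) =ᵐ[μ] fun x => ∑ i, c i * b i x := by
        have := ae_all_iff.2 hcoeB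
        filter_upwards [this] with x hx
        exact Finset.sum_congr rfl fun i _ => by rw [hx i]
      have h3 : (e j : X → ℝ) =ᵐ[μ] ((∑ i, c i • B i : Lp ℝ q μ) : X → ℝ) :=
        ((hcoeE j).trans hc).trans (h2.symm.trans h1.symm)
      exact Lp.ext h3
    rw [heq]
    exact Submodule.sum_mem _ fun i _ =>
      Submodule.smul_mem _ _ (Submodule.subset_span (Set.mem_range_self i))
  -- the truncations are linearly independent
  have hind : LinearIndependent ℝ e := by
    rw [linearIndependent_iff']
    intro s g hsum
    have hae : ∀ᵐ x ∂μ, ∑ i ∈ s, g i * h i x = 0 := by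
      have h1 := coeFn_sum_smul' (μ := μ) s g e
      rw [hsum] at h1
      filter_upwards [h1.symm, Lp.coeFn_zero ℝ q μ, ae_all_iff.2 hcoeE] with x hx1 hx2 hx3
      have hcong : ∑ i ∈ s, g i * h i x = ∑ i ∈ s, g i * (e i : X → ℝ) x :=
        Finset.sum_congr rfl fun i _ => by rw [hx3 i]
      rw [hcong, hx1, hx2]
      rfl
    have H : ∀ n : ℕ, ∀ i ∈ s, (i : ℕ) = n → g i = 0 := by
      intro n
      induction n using Nat.strong_induction_on with
      | _ n ih =>
        intro i his hin
        have hpos : 0 < μ {x | a i < |f x| ∧ |f x| ≤ next (a i)} := hnext2 (a i)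
        obtain ⟨x, hxS, hx⟩ := exists_mem_of_ae' hpos.ne' hae
        have hsingle : ∑ j ∈ s, g j * h j x = g i * h i x := by
          refine Finset.sum_eq_single_of_mem i his fun j hjs hji => ?_
          rcases (Fin.val_injective.ne hji).lt_or_gt with hlt | hgt
          · rw [ih j (hin ▸ hlt) j hjs rfl, zero_mul]
          · have hzero : h j x = 0 := by
              have h1 : |f x| ≤ a ((i : ℕ) + 1) := by rw [hstep]; exact hxS.2
              have h2 : a ((i : ℕ) + 1) ≤ a j := hmono.monotone hgt
              simp only [hh]
              exact max_eq_right (by linarith)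
            rw [hzero, mul_zero]
        rw [hsingle] at hx
        have hne : h i x ≠ 0 := by
          have : (0 : ℝ) < |f x| - a i := by linarith [hxS.1]
          have : (0 : ℝ) < h i x := lt_of_lt_of_le this (le_max_left _ _)
          linarith
        exact (mul_eq_zero.mp hx).resolve_right hne
    exact fun i his => H i i his rfl
  -- dimension contradiction
  let W := Submodule.span ℝ (Set.range B)
  haveI : FiniteDimensional ℝ W := FiniteDimensional.span_of_finite ℝ (Set.finite_range B)
  have h1 : Module.finrank ℝ W ≤ k := by
    have := finrank_range_le_card (R := ℝ) B
    simpa [Set.finrank] using this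
  let e' : Fin (k + 1) → W := fun j => ⟨e j, hmem j⟩
  have hind' : LinearIndependent ℝ e' := by
    refine LinearIndependent.of_comp W.subtype ?_
    exact hind
  have h2 : Fintype.card (Fin (k + 1)) ≤ Module.finrank ℝ W :=
    hind'.fintype_card_le_finrank
  simp only [Fintype.card_fin] at h2
  omega
end

section
/- Let (X,d,μ) be a metric measure space, 1 < p < ∞, θ > 0, and suppose B^θ_{p,p}(X) has finite dimension k ≥ 1. Then every f ∈ B^θ_{p,p}(X) is μ-a.e. equal to a simple function taking at most k+1 distinct values; if moreover μ(X) < ∞ and k = 1, every f ∈ B^θ_{p,p}(X) is μ-a.e. constant. -/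
open MeasureTheory Metric Filter ENNReal Topology

/-! ### Auxiliary material: the clamp function -/

noncomputable def clampf (t s : ℝ) : ℝ := max (min t 0) (min s (max t 0))

lemma clampf_zero (t : ℝ) : clampf t 0 = 0 := by
  unfold clampf
  rcases le_total t 0 with h | h
  · rw [min_eq_left h, max_eq_right h, min_eq_right (le_refl (0:ℝ)), max_eq_right h]
  · rw [min_eq_right h, max_eq_left h, min_eq_left h, max_self]

lemma abs_min_sub_min (a b c : ℝ) : |min a c - min b c| ≤ |a - b| := by
  have h := le_abs_self (a - b)
  have h' := neg_abs_le (a - b)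
  rcases le_total a c with h1 | h1 <;> rcases le_total b c with h2 | h2 <;>
      rw [abs_sub_le_iff] <;> constructor <;>
    simp only [min_eq_left, min_eq_right, h1, h2] <;> linarith

lemma clampf_lip (t s s' : ℝ) : |clampf t s - clampf t s'| ≤ |s - s'| := by
  unfold clampf
  have h1 : |max (min t 0) (min s (max t 0)) - max (min t 0) (min s' (max t 0))| ≤
      |min s (max t 0) - min s' (max t 0)| := by
    rw [max_comm (min t 0), max_comm (min t 0)]
    exact abs_max_sub_max_le_abs _ _ _
  exact h1.trans (abs_min_sub_min _ _ _)

lemma abs_clampf_le (t s : ℝ) : |clampf t s| ≤ |s| := by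
  have := clampf_lip t s 0
  simpa [clampf_zero] using this

lemma clampf_of_pos_nonneg {t s : ℝ} (ht : 0 < t) (hs : 0 ≤ s) : clampf t s = min s t := by
  unfold clampf
  rw [min_eq_right ht.le, max_eq_left ht.le, max_eq_right (le_min hs ht.le)]

lemma clampf_of_pos_nonpos {t s : ℝ} (ht : 0 < t) (hs : s ≤ 0) : clampf t s = 0 := by
  unfold clampf
  rw [min_eq_right ht.le, max_eq_left ht.le, max_eq_left (min_le_of_left_le hs)]

lemma clampf_of_neg_nonpos {t s : ℝ} (ht : t < 0) (hs : s ≤ 0) : clampf t s = max s t := by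
  unfold clampf
  rw [min_eq_left ht.le, max_eq_right ht.le, min_eq_left hs, max_comm]

lemma clampf_of_neg_nonneg {t s : ℝ} (ht : t < 0) (hs : 0 ≤ s) : clampf t s = 0 := by
  unfold clampf
  rw [min_eq_left ht.le, max_eq_right ht.le, min_eq_right hs, max_eq_right ht.le]

lemma continuous_clampf (t : ℝ) : Continuous (clampf t) := by
  unfold clampf; fun_prop

/-! ### The key linear-algebra/piecewise-linear lemma -/

lemma keyzero (n : ℕ) (a : Fin (n+1) → ℝ) (t c : Fin n → ℝ)
    (ha : StrictMono a)
    (hat : ∀ j : Fin n, a j.castSucc < t j ∧ t j < a j.succ)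
    (ht0 : ∀ j, t j ≠ 0)
    (heq : ∀ i, ∑ j, c j * clampf (t j) (a i) = 0) : ∀ j, c j = 0 := by
  have hmono : ∀ {j j' : Fin n}, j < j' → t j < t j' := by
    intro j j' hjj
    have h1 : a j.succ ≤ a j'.castSucc := by
      apply ha.monotone
      rw [Fin.le_def]
      have h := Fin.lt_def.mp hjj
      simp only [Fin.val_succ, Fin.coe_castSucc]
      omega
    exact lt_of_lt_of_le (hat j).2 (lt_of_le_of_lt h1 (hat j').1).le
  have hp : ∀ i, ∑ j, c j * clampf (t j) (max (a i) 0) = 0 := by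
    intro i
    rcases le_total 0 (a i) with h | h
    · rw [max_eq_left h]; exact heq i
    · rw [max_eq_right h]; simp [clampf_zero]
  have hq : ∀ i, ∑ j, c j * clampf (t j) (min (a i) 0) = 0 := by
    intro i
    rcases le_total (a i) 0 with h | h
    · rw [min_eq_left h]; exact heq i
    · rw [min_eq_right h]; simp [clampf_zero]
  have hdiff : ∀ P0 P1 : ℝ, (∑ j, c j * clampf (t j) P0 = 0) →
      (∑ j, c j * clampf (t j) P1 = 0) →
      ∑ j, c j * (clampf (t j) P1 - clampf (t j) P0) = 0 := by
    intro P0 P1 h0 h1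
    have h2 : ∑ j, (c j * clampf (t j) P1 - c j * clampf (t j) P0) = 0 := by
      rw [Finset.sum_sub_distrib, h0, h1, sub_zero]
    simpa [mul_sub] using h2
  have corePos : ∀ j : Fin n, 0 < t j → (∀ j' : Fin n, j < j' → c j' = 0) → c j = 0 := by
    intro j htj IH
    set P0 := max (a j.castSucc) 0 with hP0
    set P1 := max (a j.succ) 0 with hP1
    have hsum := hdiff P0 P1 (hp j.castSucc) (hp j.succ)
    have hsingle : ∑ j', c j' * (clampf (t j') P1 - clampf (t j') P0) =
        c j * (clampf (t j) P1 - clampf (t j) P0) := by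
      apply Finset.sum_eq_single_of_mem j (Finset.mem_univ j)
      intro j' _ hne
      rcases lt_or_gt_of_ne hne with hlt | hgt
      · rcases lt_trichotomy (t j') 0 with htn | htz | htp
        · rw [clampf_of_neg_nonneg htn (le_max_right _ _),
            clampf_of_neg_nonneg htn (le_max_right _ _), sub_self, mul_zero]
        · exact absurd htz (ht0 j')
        · have h1 : t j' ≤ a j.castSucc := by
            have : a j'.succ ≤ a j.castSucc := by
              apply ha.monotone
              rw [Fin.le_def]
              have h := Fin.lt_def.mp hlt
              simp only [Fin.val_succ, Fin.coe_castSucc]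
              omega
            exact ((hat j').2.trans_le this).le
          have h2 : t j' ≤ P0 := h1.trans (le_max_left _ _)
          have h3 : t j' ≤ P1 :=
            h2.trans (max_le_max_right 0 (ha.monotone (Fin.castSucc_le_succ j)))
          rw [clampf_of_pos_nonneg htp (le_max_right _ _),
            clampf_of_pos_nonneg htp (le_max_right _ _),
            min_eq_right h2, min_eq_right h3, sub_self, mul_zero]
      · rw [IH j' hgt, zero_mul]
    rw [hsingle] at hsum
    have hv1 : clampf (t j) P1 = t j := by
      rw [clampf_of_pos_nonneg htj (le_max_right _ _), min_eq_right]
      exact le_max_of_le_left (hat j).2.le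
    have hv0 : clampf (t j) P0 = P0 := by
      rw [clampf_of_pos_nonneg htj (le_max_right _ _), min_eq_left]
      exact max_le (hat j).1.le htj.le
    have hltP : P0 < t j := max_lt (hat j).1 htj
    rw [hv1, hv0] at hsum
    rcases mul_eq_zero.mp hsum with h | h
    · exact h
    · exact absurd h (by linarith)
  have coreNeg : ∀ j : Fin n, t j < 0 → (∀ j' : Fin n, j' < j → c j' = 0) → c j = 0 := by
    intro j htj IH
    set Q0 := min (a j.castSucc) 0 with hQ0
    set Q1 := min (a j.succ) 0 with hQ1
    have hsum := hdiff Q0 Q1 (hq j.castSucc) (hq j.succ)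
    have hsingle : ∑ j', c j' * (clampf (t j') Q1 - clampf (t j') Q0) =
        c j * (clampf (t j) Q1 - clampf (t j) Q0) := by
      apply Finset.sum_eq_single_of_mem j (Finset.mem_univ j)
      intro j' _ hne
      rcases lt_or_gt_of_ne hne with hlt | hgt
      · rw [IH j' hlt, zero_mul]
      · rcases lt_trichotomy (t j') 0 with htn | htz | htp
        · have h1 : a j.succ ≤ t j' := by
            have : a j.succ ≤ a j'.castSucc := by
              apply ha.monotone
              rw [Fin.le_def]
              have h := Fin.lt_def.mp hgt
              simp only [Fin.val_succ, Fin.coe_castSucc]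
              omega
            exact this.trans (hat j').1.le
          have h2 : Q1 ≤ t j' := (min_le_left _ _).trans h1
          have h3 : Q0 ≤ t j' :=
            le_trans (min_le_min (ha.monotone (Fin.castSucc_le_succ j)) le_rfl) h2
          rw [clampf_of_neg_nonpos htn (min_le_right _ _),
            clampf_of_neg_nonpos htn (min_le_right _ _),
            max_eq_right h2, max_eq_right h3, sub_self, mul_zero]
        · exact absurd htz (ht0 j')
        · rw [clampf_of_pos_nonpos htp (min_le_right _ _),
            clampf_of_pos_nonpos htp (min_le_right _ _), sub_self, mul_zero]
    rw [hsingle] at hsum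
    have hv1 : clampf (t j) Q1 = Q1 := by
      rw [clampf_of_neg_nonpos htj (min_le_right _ _), max_eq_left]
      exact le_min (hat j).2.le htj.le
    have hv0 : clampf (t j) Q0 = t j := by
      rw [clampf_of_neg_nonpos htj (min_le_right _ _), max_eq_right]
      exact (min_le_left _ _).trans (hat j).1.le
    have hlt' : t j < Q1 := lt_min (hat j).2 htj
    rw [hv1, hv0] at hsum
    rcases mul_eq_zero.mp hsum with h | h
    · exact h
    · exact absurd h (by linarith)
  have hposAll : ∀ m : ℕ, ∀ j : Fin n, n - (j : ℕ) ≤ m + 1 → 0 < t j → c j = 0 := by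
    intro m
    induction m with
    | zero =>
      intro j hm hj
      apply corePos j hj
      intro j' hlt
      exfalso
      have := j'.isLt
      have := Fin.lt_def.mp hlt
      omega
    | succ m ih =>
      intro j hm hj
      apply corePos j hj
      intro j' hlt
      have hlt' := Fin.lt_def.mp hlt
      exact ih j' (by omega) (lt_trans hj (hmono hlt))
  have hnegAll : ∀ m : ℕ, ∀ j : Fin n, (j : ℕ) ≤ m → t j < 0 → c j = 0 := by
    intro m
    induction m with
    | zero =>
      intro j hm hj
      apply coreNeg j hj
      intro j' hlt
      exfalso
      have := Fin.lt_def.mp hlt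
      omega
    | succ m ih =>
      intro j hm hj
      apply coreNeg j hj
      intro j' hlt
      have hlt' := Fin.lt_def.mp hlt
      exact ih j' (by omega) (lt_trans (hmono hlt) hj)
  intro j
  rcases lt_trichotomy (t j) 0 with h | h | h
  · exact hnegAll n j (by omega) h
  · exact absurd h (ht0 j)
  · exact hposAll n j (by omega) h

/-! ### Essential values -/

def essSet {X : Type*} [MeasurableSpace X] (μ : Measure X) (f : X → ℝ) : Set ℝ :=
  {a | ∀ ε > 0, 0 < μ (f ⁻¹' Metric.ball a ε)}

lemma ae_mem_essSet {X : Type*} [MeasurableSpace X] (μ : Measure X) (f : X → ℝ) :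
    ∀ᵐ x ∂μ, f x ∈ essSet μ f := by
  classical
  set s : ℚ × ℚ → Set X := fun qr =>
    if μ (f ⁻¹' Metric.ball (qr.1 : ℝ) (qr.2 : ℝ)) = 0
      then f ⁻¹' Metric.ball (qr.1 : ℝ) (qr.2 : ℝ) else ∅ with hs
  have hnull : μ (⋃ qr, s qr) = 0 := by
    apply measure_iUnion_null
    intro qr
    by_cases h : μ (f ⁻¹' Metric.ball (qr.1 : ℝ) (qr.2 : ℝ)) = 0
    · simpa [hs, h] using h
    · simp [hs, h]
  rw [ae_iff]
  apply measure_mono_null _ hnull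
  intro x hx
  simp only [Set.mem_setOf_eq] at hx
  rw [essSet, Set.mem_setOf_eq] at hx
  push_neg at hx
  obtain ⟨ε, hε, hμ⟩ := hx
  have hμ0 : μ (f ⁻¹' Metric.ball (f x) ε) = 0 := le_antisymm hμ zero_le
  obtain ⟨q, hq⟩ := exists_rat_near (f x) (by positivity : (0:ℝ) < ε/3)
  obtain ⟨r, hr1, hr2⟩ := exists_rat_btwn (show (ε/3 : ℝ) < ε/2 by linarith)
  have hxball : x ∈ f ⁻¹' Metric.ball (q : ℝ) (r : ℝ) := by
    simp only [Set.mem_preimage, Metric.mem_ball]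
    rw [Real.dist_eq]
    linarith [hq, hr1]
  have hsub : f ⁻¹' Metric.ball (q : ℝ) (r : ℝ) ⊆ f ⁻¹' Metric.ball (f x) ε := by
    apply Set.preimage_mono
    intro y hy
    rw [Metric.mem_ball, Real.dist_eq] at hy ⊢
    have h1 : |y - (q : ℝ)| < r := hy
    have h2 : |(q:ℝ) - f x| < ε/3 := by rwa [abs_sub_comm] at hq
    calc |y - f x| = |(y - q) + ((q:ℝ) - f x)| := by ring_nf
      _ ≤ |y - (q:ℝ)| + |(q:ℝ) - f x| := abs_add_le _ _
      _ < r + ε/3 := by linarith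
      _ < ε := by linarith
  have hzero : μ (f ⁻¹' Metric.ball (q : ℝ) (r : ℝ)) = 0 :=
    le_antisymm ((measure_mono hsub).trans hμ0.le) zero_le
  exact Set.mem_iUnion.mpr ⟨(q, r), by simp [hs, hzero]; exact hxball⟩

/-! ### Besov facts -/

lemma memBesov_clampf {X : Type*} [MetricSpace X] [MeasurableSpace X]
    {μ : Measure X} {p θ : ℝ} (hp : 1 < p) {f : X → ℝ} (hf : MemBesov μ p θ f) (t : ℝ) :
    MemBesov μ p θ (fun x => clampf t (f x)) := by
  constructor
  · apply MemLp.of_le hf.1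
    · exact (continuous_clampf t).comp_aestronglyMeasurable hf.1.aestronglyMeasurable
    · filter_upwards with x
      simpa [Real.norm_eq_abs] using abs_clampf_le t (f x)
  · refine lt_of_le_of_lt ?_ hf.2
    unfold besovEnergy
    apply lintegral_mono
    intro x
    apply lintegral_mono
    intro y
    apply ENNReal.div_le_div_right
    apply ENNReal.ofReal_le_ofReal
    exact Real.rpow_le_rpow (abs_nonneg _) (clampf_lip t (f x) (f y)) (by linarith)

lemma besovEnergy_const {X : Type*} [MetricSpace X] [MeasurableSpace X]
    (μ : Measure X) (p θ : ℝ) (hp : 0 < p) (c : ℝ) :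
    besovEnergy μ p θ (fun _ => c) = 0 := by
  unfold besovEnergy
  have h0 : ENNReal.ofReal ((0:ℝ) ^ p) = 0 := by
    simp [Real.zero_rpow (ne_of_gt hp)]
  simp [h0]

/-! ### Main argument : no k+2 essential values -/

lemma no_many_values {X : Type*} [MetricSpace X] [MeasurableSpace X]
    (μ : Measure X) (p θ : ℝ) (hp : 1 < p)
    (k : ℕ) (b : Fin k → X → ℝ)
    (hspan : ∀ f : X → ℝ, MemBesov μ p θ f →
      ∃ c : Fin k → ℝ, f =ᵐ[μ] fun x => ∑ i, c i * b i x)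
    (f : X → ℝ) (hf : MemBesov μ p θ f)
    (a : Fin (k+2) → ℝ) (haS : StrictMono a) (haE : ∀ i, a i ∈ essSet μ f) : False := by
  classical
  -- choose interlacing nonzero truncation levels
  set t : Fin (k+1) → ℝ := fun j =>
    if 0 < a j.succ then (max (a j.castSucc) 0 + a j.succ)/2
      else (a j.castSucc + a j.succ)/2 with htdef
  have hacs : ∀ j : Fin (k+1), a j.castSucc < a j.succ :=
    fun j => haS Fin.castSucc_lt_succ
  have hat : ∀ j : Fin (k+1), a j.castSucc < t j ∧ t j < a j.succ := by
    intro j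
    by_cases h : 0 < a j.succ
    · have hM : max (a j.castSucc) 0 < a j.succ := max_lt (hacs j) h
      have hM2 : a j.castSucc ≤ max (a j.castSucc) 0 := le_max_left _ _
      simp only [htdef, if_pos h]
      constructor <;> linarith
    · simp only [htdef, if_neg h]
      have := hacs j
      constructor <;> linarith
  have ht0 : ∀ j : Fin (k+1), t j ≠ 0 := by
    intro j
    by_cases h : 0 < a j.succ
    · have hM2 : (0:ℝ) ≤ max (a j.castSucc) 0 := le_max_right _ _
      simp only [htdef, if_pos h]
      positivity
    · push_neg at h
      have h2 : t j < a j.succ := (hat j).2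
      exact ne_of_lt (lt_of_lt_of_le h2 h)
  -- the truncations and their coordinates
  have hw : ∀ j : Fin (k+1), MemBesov μ p θ (fun x => clampf (t j) (f x)) :=
    fun j => memBesov_clampf hp hf (t j)
  choose M hM using fun j => hspan _ (hw j)
  -- linear dependence of the coordinate vectors
  have hdep : ¬ LinearIndependent ℝ M := by
    intro hli
    have hle := hli.fintype_card_le_finrank
    rw [Module.finrank_fin_fun, Fintype.card_fin] at hle
    omega
  obtain ⟨c, hc, j₀, hj₀⟩ := Fintype.not_linearIndependent_iff.mp hdep
  -- a.e. vanishing of the combination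
  have hcoef : ∀ i : Fin k, (∑ j, c j * M j i) = 0 := by
    intro i
    have := congrFun hc i
    simpa [Finset.sum_apply, Pi.smul_apply, smul_eq_mul] using this
  have hzero : ∀ᵐ x ∂μ, ∑ j, c j * clampf (t j) (f x) = 0 := by
    have hae : ∀ᵐ x ∂μ, ∀ j : Fin (k+1),
        clampf (t j) (f x) = ∑ i, M j i * b i x := ae_all_iff.mpr fun j => hM j
    filter_upwards [hae] with x hx
    calc ∑ j, c j * clampf (t j) (f x)
        = ∑ j, c j * ∑ i, M j i * b i x := by
          exact Finset.sum_congr rfl fun j _ => by rw [hx j]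
      _ = ∑ j, ∑ i, c j * M j i * b i x := by
          exact Finset.sum_congr rfl fun j _ => by rw [Finset.mul_sum]; ring_nf
      _ = ∑ i, ∑ j, c j * M j i * b i x := Finset.sum_comm
      _ = ∑ i, (∑ j, c j * M j i) * b i x := by
          exact Finset.sum_congr rfl fun i _ => by rw [Finset.sum_mul]
      _ = 0 := by simp [hcoef]
  -- the combination vanishes at each essential value
  have hg : ∀ i : Fin (k+2), ∑ j, c j * clampf (t j) (a i) = 0 := by
    intro i
    by_contra hne
    have hG : Continuous (fun s : ℝ => ∑ j, c j * clampf (t j) s) := by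
      apply continuous_finset_sum
      intro j _
      exact continuous_const.mul (continuous_clampf (t j))
    have hU : IsOpen {s : ℝ | ∑ j, c j * clampf (t j) s ≠ 0} :=
      isOpen_compl_singleton.preimage hG
    obtain ⟨ε, hε, hball⟩ := Metric.isOpen_iff.mp hU (a i) hne
    have hpos : 0 < μ (f ⁻¹' Metric.ball (a i) ε) := haE i ε hε
    have hsub : f ⁻¹' Metric.ball (a i) ε ⊆
        {x | ¬ (∑ j, c j * clampf (t j) (f x) = 0)} := by
      intro x hx
      exact hball hx
    have : μ (f ⁻¹' Metric.ball (a i) ε) = 0 :=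
      measure_mono_null hsub (ae_iff.mp hzero)
    exact absurd this (ne_of_gt hpos)
  exact hj₀ (keyzero (k+1) a t c haS hat ht0 hg j₀)

/-- If `B^θ_{p,p}(X)` has finite dimension `k ≥ 1` (witnessed by a basis of `k` functions,
linearly independent and spanning up to `μ`-a.e. equality), then every `f ∈ B^θ_{p,p}(X)` is
`μ`-a.e. equal to a simple function taking at most `k+1` values; and if moreover `μ(X) < ∞`
and `k = 1`, every `f ∈ B^θ_{p,p}(X)` is `μ`-a.e. constant. -/
theorem statement9 {X : Type*} [MetricSpace X] [MeasurableSpace X]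
    (μ : Measure X) (hball : ∀ (x : X) (r : ℝ), 0 < r → 0 < μ (ball x r) ∧ μ (ball x r) < ⊤)
    (p θ : ℝ) (hp : 1 < p) (hθ : 0 < θ)
    (k : ℕ) (hk : 1 ≤ k) (b : Fin k → X → ℝ) (hb : ∀ i, MemBesov μ p θ (b i))
    (hind : ∀ c : Fin k → ℝ, (fun x => ∑ i, c i * b i x) =ᵐ[μ] (fun _ => (0:ℝ)) → c = 0)
    (hspan : ∀ f : X → ℝ, MemBesov μ p θ f →
      ∃ c : Fin k → ℝ, f =ᵐ[μ] fun x => ∑ i, c i * b i x) :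
    (∀ f : X → ℝ, MemBesov μ p θ f →
      ∃ s : Finset ℝ, s.card ≤ k + 1 ∧ ∀ᵐ x ∂μ, f x ∈ s) ∧
    (μ Set.univ < ⊤ → k = 1 →
      ∀ f : X → ℝ, MemBesov μ p θ f → ∃ c : ℝ, f =ᵐ[μ] fun _ => c) := by
  constructor
  · intro f hf
    -- no finset of k+2 essential values
    have hcard : ∀ s' : Finset ℝ, ↑s' ⊆ essSet μ f → s'.card ≤ k + 1 := by
      intro s' hsub
      by_contra hcontra
      push_neg at hcontra
      obtain ⟨u, hu_sub, hu_card⟩ := Finset.exists_subset_card_eq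
        (show k + 2 ≤ s'.card by omega)
      set a : Fin (k+2) → ℝ := fun i => u.orderEmbOfFin hu_card i with ha
      have haS : StrictMono a := (u.orderEmbOfFin hu_card).strictMono
      have haE : ∀ i, a i ∈ essSet μ f := fun i =>
        hsub (hu_sub (Finset.orderEmbOfFin_mem u hu_card i))
      exact no_many_values μ p θ hp k b hspan f hf a haS haE
    have hfin : (essSet μ f).Finite := by
      by_contra hinf
      obtain ⟨u, hu_sub, hu_card⟩ := Set.Infinite.exists_subset_card_eq hinf (k+2)
      have := hcard u hu_sub
      omega
    refine ⟨hfin.toFinset, ?_, ?_⟩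
    · apply hcard
      rw [Set.Finite.coe_toFinset]
    · filter_upwards [ae_mem_essSet μ f] with x hx
      exact (Set.Finite.mem_toFinset hfin).mpr hx
  · intro hfin hk1 f hf
    subst hk1
    haveI : IsFiniteMeasure μ := ⟨hfin⟩
    have hone : MemBesov μ p θ (fun _ => (1:ℝ)) := by
      constructor
      · exact memLp_const 1
      · rw [besovEnergy_const μ p θ (by linarith) 1]
        exact ENNReal.zero_lt_top
    obtain ⟨c1, hc1⟩ := hspan _ hone
    obtain ⟨cf, hcf⟩ := hspan f hf
    by_cases h : c1 0 = 0
    · have h10 : ∀ᵐ x ∂μ, (1:ℝ) = 0 := by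
        filter_upwards [hc1] with x hx
        simpa [Fin.sum_univ_one, h] using hx
      have hμ0 : μ Set.univ = 0 := by
        have h2 := ae_iff.mp h10
        simpa using h2
      have hμ : μ = 0 := Measure.measure_univ_eq_zero.mp hμ0
      refine ⟨0, ?_⟩
      rw [Filter.EventuallyEq, hμ, ae_zero]
      exact Filter.eventually_bot
    · refine ⟨cf 0 * (c1 0)⁻¹, ?_⟩
      filter_upwards [hc1, hcf] with x h1 h2
      simp only [Fin.sum_univ_one] at h1 h2
      have hb0 : b 0 x = (c1 0)⁻¹ := by
        field_simp
        linarith [h1]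
      rw [h2, hb0]
end

section
/- Let n ≥ 2, X = [0,1]^n ∪ [-1,0]^n ⊂ ℝ^n with the Euclidean metric and n-dimensional Lebesgue measure, and E = [0,1]^n. For 1 < p < ∞ and θ > 0, the indicator χ_E satisfies ∫_X ∫_X |χ_E(x)-χ_E(y)|^p / |x-y|^{n+θp} dx dy < ∞ if and only if θp < n. In particular χ_E ∈ B^θ_{p,p}(X) if and only if θp < n. -/
open MeasureTheory Metric Filter ENNReal Topology

/-- The positive unit cube `[0,1]^n`. -/
def cubeP (n : ℕ) : Set (EuclideanSpace ℝ (Fin n)) := {x | ∀ i, x i ∈ Set.Icc (0:ℝ) 1}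

/-- The negative unit cube `[-1,0]^n`. -/
def cubeN (n : ℕ) : Set (EuclideanSpace ℝ (Fin n)) := {x | ∀ i, x i ∈ Set.Icc (-1:ℝ) 0}

variable {n : ℕ}

noncomputable abbrev E (n : ℕ) := EuclideanSpace ℝ (Fin n)

lemma meas_box (a b : Fin n → ℝ) : MeasurableSet {x : E n | ∀ i, x i ∈ Set.Icc (a i) (b i)} := by
  have : {x : E n | ∀ i, x i ∈ Set.Icc (a i) (b i)} = ⋂ i, (fun x : E n => x i) ⁻¹' Set.Icc (a i) (b i) := by
    ext x; simp
  rw [this]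
  exact MeasurableSet.iInter fun i => ((measurable_pi_apply i).comp (WithLp.measurable_ofLp 2 (Fin n → ℝ))) measurableSet_Icc

lemma volume_box (a b : Fin n → ℝ) :
    volume {x : E n | ∀ i, x i ∈ Set.Icc (a i) (b i)} = ∏ i, ENNReal.ofReal (b i - a i) := by
  have h := EuclideanSpace.volume_preserving_symm_measurableEquiv_toLp (Fin n)
  have hs : {x : E n | ∀ i, x i ∈ Set.Icc (a i) (b i)} =
      (MeasurableEquiv.toLp 2 (Fin n → ℝ)).symm ⁻¹' (Set.univ.pi fun i => Set.Icc (a i) (b i)) := by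
    ext x
    simp only [Set.mem_setOf_eq, Set.mem_preimage, Set.mem_univ_pi]
    rfl
  rw [hs, h.measure_preimage ((MeasurableSet.univ_pi fun i => measurableSet_Icc).nullMeasurableSet),
    volume_pi_pi]
  simp [Real.volume_Icc]

lemma norm_le_sqrt_mul {x : E n} {r : ℝ} (hr : 0 ≤ r) (h : ∀ i, |x i| ≤ r) :
    ‖x‖ ≤ Real.sqrt n * r := by
  rw [EuclideanSpace.norm_eq, ← Real.sqrt_sq hr, ← Real.sqrt_mul (by positivity : (0:ℝ) ≤ (n:ℝ))]
  apply Real.sqrt_le_sqrt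
  calc ∑ i, ‖x i‖ ^ 2 ≤ ∑ _i : Fin n, r ^ 2 := by
        apply Finset.sum_le_sum
        intro i _
        rw [Real.norm_eq_abs]
        exact pow_le_pow_left₀ (abs_nonneg _) (h i) 2
    _ = n * r ^ 2 := by simp [mul_comm]

lemma abs_le_norm (x : E n) (i : Fin n) : |x i| ≤ ‖x‖ := by
  rw [EuclideanSpace.norm_eq, ← Real.sqrt_sq (abs_nonneg (x i))]
  apply Real.sqrt_le_sqrt
  rw [sq_abs]
  exact Finset.single_le_sum (f := fun j => ‖x j‖ ^ 2) (fun j _ => by positivity) (Finset.mem_univ i)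
    |>.trans_eq' (by rw [Real.norm_eq_abs, sq_abs])

/-- Upper bound on the measure of a norm-ball piece of any set. -/
lemma vol_norm_le (S : Set (E n)) (r : ℝ) (hr : 0 ≤ r) :
    volume {x ∈ S | ‖x‖ ≤ r} ≤ ENNReal.ofReal ((2*r)^n) := by
  have hsub : {x ∈ S | ‖x‖ ≤ r} ⊆ {x : E n | ∀ i, x i ∈ Set.Icc ((fun _ => -r) i) ((fun _ => r) i)} := by
    intro x hx i
    have := (abs_le.mp ((abs_le_norm x i).trans hx.2))
    exact ⟨this.1, this.2⟩
  calc volume {x ∈ S | ‖x‖ ≤ r} ≤ _ := measure_mono hsub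
    _ = ENNReal.ofReal ((2*r)^n) := by
        rw [volume_box]
        simp only [sub_neg_eq_add]
        rw [Finset.prod_const, ← ENNReal.ofReal_pow (by linarith)]
        norm_num [two_mul]

/-- The core lemma: finiteness of `∫_S ‖x‖^{-t}`. -/
lemma core (hn : 1 ≤ n) {t : ℝ} (ht : 0 < t) (S : Set (E n)) (hSm : MeasurableSet S)
    (hlow : ∀ r : ℝ, 0 ≤ r → r ≤ 1 →
      ENNReal.ofReal (r^n) ≤ volume {x ∈ S | ‖x‖ ≤ Real.sqrt n * r})
    (hbdd : ∀ x ∈ S, ‖x‖ ≤ Real.sqrt n) :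
    (∫⁻ x in S, (ENNReal.ofReal (‖x‖ ^ t))⁻¹ ∂volume) < ⊤ ↔ t < n := by
  have hc : (0:ℝ) < Real.sqrt n := Real.sqrt_pos.mpr (by exact_mod_cast hn)
  have hc1 : (1:ℝ) ≤ Real.sqrt n := by
    rw [show (1:ℝ) = Real.sqrt 1 by simp]
    exact Real.sqrt_le_sqrt (by exact_mod_cast hn)
  set c : ℝ := Real.sqrt n with hcdef
  set q : ℝ := (4*c)⁻¹ with hqdef
  have hq0 : 0 < q := by positivity
  have hq1 : q < 1 := by
    rw [hqdef, inv_lt_one_iff₀]; right; linarith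
  set ρ : ℕ → ℝ := fun k => c * q ^ k with hρdef
  have hρ0 : ∀ k, 0 < ρ k := fun k => by positivity
  have hρanti : ∀ {j k}, j ≤ k → ρ k ≤ ρ j := fun {j k} hjk => by
    apply mul_le_mul_of_nonneg_left (pow_le_pow_of_le_one hq0.le hq1.le hjk) hc.le
  have hρsucc : ∀ k, ρ (k+1) < ρ k := fun k => by
    apply mul_lt_mul_of_pos_left _ hc
    exact pow_lt_pow_right_of_lt_one₀ hq0 hq1 (Nat.lt_succ_self k)
  set A : ℕ → Set (E n) := fun k => {x ∈ S | ‖x‖ ∈ Set.Ioc (ρ (k+1)) (ρ k)} with hAdef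
  have hAm : ∀ k, MeasurableSet (A k) := fun k =>
    hSm.inter (measurable_norm measurableSet_Ioc)
  have hkey : ∀ j k, j < k → Disjoint (A j) (A k) := by
    intro j k h
    rw [Set.disjoint_left]
    rintro x ⟨_, hx1, _⟩ ⟨_, _, hx2⟩
    exact absurd (hx2.trans (hρanti h)) (not_le.mpr hx1)
  have hAdisj : Pairwise (Function.onFun Disjoint A) := by
    intro j k hjk
    rcases Ne.lt_or_gt hjk with h | h
    · exact hkey j k h
    · exact (hkey k j h).symm
  have hAsub : ∀ k, A k ⊆ S := fun k x hx => hx.1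
  have hcover : S \ {x : E n | ‖x‖ = 0} ⊆ ⋃ k, A k := by
    rintro x ⟨hxS, hx0⟩
    have hx0' : 0 < ‖x‖ := lt_of_le_of_ne (norm_nonneg x) (Ne.symm hx0)
    obtain ⟨m, hm⟩ := exists_pow_lt_of_lt_one (div_pos hx0' hc) hq1
    have hPm : ρ (m+1) < ‖x‖ := by
      have : q ^ (m+1) ≤ q ^ m := pow_le_pow_of_le_one hq0.le hq1.le (Nat.le_succ m)
      rw [hρdef]
      calc c * q^(m+1) ≤ c * q^m := by nlinarith
        _ < c * (‖x‖ / c) := by nlinarith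
        _ = ‖x‖ := by field_simp
    have hex : ∃ k, ρ (k+1) < ‖x‖ := ⟨m, hPm⟩
    set K := Nat.find hex with hKdef
    have hK : ρ (K+1) < ‖x‖ := Nat.find_spec hex
    have hK2 : ‖x‖ ≤ ρ K := by
      by_cases hK0 : K = 0
      · rw [hK0]; simpa [hρdef] using hbdd x hxS
      · obtain ⟨j, hj⟩ := Nat.exists_eq_succ_of_ne_zero hK0
        have := Nat.find_min hex (show j < K by omega)
        rw [hj]; exact not_lt.mp this
    exact Set.mem_iUnion.mpr ⟨K, hxS, hK, hK2⟩
  -- the origin piece is null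
  have hnull : volume {x : E n | ‖x‖ = 0} = 0 := by
    have : {x : E n | ‖x‖ = 0} ⊆ {x : E n | ∀ i, x i ∈ Set.Icc ((fun _ => (0:ℝ)) i) ((fun _ => (0:ℝ)) i)} := by
      intro x hx i
      have : x = 0 := norm_eq_zero.mp hx
      simp [this]
    refine measure_mono_null this ?_
    rw [volume_box]
    simp [Finset.prod_const, zero_pow (by omega : n ≠ 0)]
  have hae : S =ᵐ[volume] ⋃ k, A k := by
    rw [MeasureTheory.ae_eq_set]
    constructor
    · refine measure_mono_null (fun x hx => ?_) hnull
      by_contra h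
      exact hx.2 (hcover ⟨hx.1, h⟩)
    · rw [Set.diff_eq_empty.mpr (Set.iUnion_subset hAsub)]; simp
  have hsplit : (∫⁻ x in S, (ENNReal.ofReal (‖x‖ ^ t))⁻¹ ∂volume)
      = ∑' k, ∫⁻ x in A k, (ENNReal.ofReal (‖x‖ ^ t))⁻¹ ∂volume := by
    rw [setLIntegral_congr hae, lintegral_iUnion hAm hAdisj]
  have hfm : Measurable (fun x : E n => (ENNReal.ofReal (‖x‖ ^ t))⁻¹) :=
    (((Real.continuous_rpow_const ht.le).comp continuous_norm).measurable.ennreal_ofReal).inv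
  constructor
  · -- finiteness implies t < n
    intro hfin
    by_contra htn
    push_neg at htn   -- n ≤ t
    set ε : ℝ≥0∞ := ENNReal.ofReal ((1 - (1/2:ℝ)^n) / c ^ t) with hεdef
    have hε0 : ε ≠ 0 := by
      have h2 : ((1:ℝ)/2)^n ≤ (1/2)^1 := pow_le_pow_of_le_one (by norm_num) (by norm_num) hn
      rw [hεdef]
      simp only [ne_eq, ENNReal.ofReal_eq_zero, not_le]
      apply div_pos
      · norm_num at h2 ⊢; linarith
      · positivity
    have hlowk : ∀ k, ε ≤ ∫⁻ x in A k, (ENNReal.ofReal (‖x‖ ^ t))⁻¹ ∂volume := by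
      intro k
      have hq1k : q ^ k ≤ 1 := pow_le_one₀ hq0.le hq1.le
      have hq0k : (0:ℝ) < q ^ k := by positivity
      -- lower bound on the volume of the shell
      have hAeq : A k = {x ∈ S | ‖x‖ ≤ ρ k} \ {x ∈ S | ‖x‖ ≤ ρ (k+1)} := by
        ext x
        simp only [hAdef, Set.mem_setOf_eq, Set.mem_Ioc, Set.mem_diff, not_and, not_le]
        constructor
        · rintro ⟨hS, h1, h2⟩; exact ⟨⟨hS, h2⟩, fun _ => h1⟩
        · rintro ⟨⟨hS, h2⟩, h1⟩; exact ⟨hS, h1 hS, h2⟩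
      have hvol : ENNReal.ofReal ((q^k)^n * (1 - (1/2:ℝ)^n)) ≤ volume (A k) := by
        rw [hAeq]
        have hsub : {x ∈ S | ‖x‖ ≤ ρ (k+1)} ⊆ {x ∈ S | ‖x‖ ≤ ρ k} :=
          fun x hx => ⟨hx.1, hx.2.trans (hρsucc k).le⟩
        have hmeas2 : MeasurableSet {x ∈ S | ‖x‖ ≤ ρ (k+1)} :=
          hSm.inter (measurable_norm measurableSet_Iic)
        have hfin2 : volume {x ∈ S | ‖x‖ ≤ ρ (k+1)} ≠ ⊤ :=
          ((vol_norm_le S _ (hρ0 _).le).trans_lt ENNReal.ofReal_lt_top).ne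
        rw [measure_diff hsub hmeas2.nullMeasurableSet hfin2]
        have h1 : ENNReal.ofReal ((q^k)^n) ≤ volume {x ∈ S | ‖x‖ ≤ ρ k} := by
          have := hlow (q^k) hq0k.le hq1k
          simpa [hρdef] using this
        have h2 : volume {x ∈ S | ‖x‖ ≤ ρ (k+1)} ≤ ENNReal.ofReal ((1/2:ℝ)^n * (q^k)^n) := by
          refine (vol_norm_le S _ (hρ0 _).le).trans ?_
          apply ENNReal.ofReal_le_ofReal
          have : 2 * ρ (k+1) = (1/2) * q^k := by
            rw [hρdef]; simp only []
            rw [pow_succ, hqdef]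
            field_simp
            ring
          rw [this, mul_pow]
        calc ENNReal.ofReal ((q^k)^n * (1 - (1/2:ℝ)^n))
            = ENNReal.ofReal ((q^k)^n) - ENNReal.ofReal ((1/2:ℝ)^n * (q^k)^n) := by
              rw [← ENNReal.ofReal_sub _ (by positivity)]
              ring_nf
          _ ≤ volume {x ∈ S | ‖x‖ ≤ ρ k} - volume {x ∈ S | ‖x‖ ≤ ρ (k+1)} :=
              tsub_le_tsub h1 h2
      -- lower bound on the integrand
      have hptwise : ∀ x ∈ A k, (ENNReal.ofReal (ρ k ^ t))⁻¹ ≤ (ENNReal.ofReal (‖x‖ ^ t))⁻¹ := by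
        intro x hx
        apply ENNReal.inv_le_inv'
        exact ENNReal.ofReal_le_ofReal (Real.rpow_le_rpow (norm_nonneg x) hx.2.2 ht.le)
      calc ε ≤ (ENNReal.ofReal (ρ k ^ t))⁻¹ * ENNReal.ofReal ((q^k)^n * (1 - (1/2:ℝ)^n)) := by
            rw [← ENNReal.ofReal_inv_of_pos (Real.rpow_pos_of_pos (hρ0 k) t),
              ← ENNReal.ofReal_mul (by positivity)]
            apply ENNReal.ofReal_le_ofReal
            have hq1k : q ^ k ≤ 1 := pow_le_one₀ hq0.le hq1.le
            have hq0k : (0:ℝ) < q ^ k := by positivity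
            have hmr : ρ k ^ t = c^t * (q^k)^t := by
              rw [hρdef]; exact Real.mul_rpow hc.le (by positivity)
            have hG : (1:ℝ) ≤ (q^k)^(n:ℝ) / (q^k)^t := by
              rw [← Real.rpow_sub hq0k]
              exact Real.one_le_rpow_of_pos_of_le_one_of_nonpos hq0k hq1k (by linarith)
            have hba : (q^k)^t ≤ (q^k)^(n:ℝ) := by
              rw [one_le_div (Real.rpow_pos_of_pos hq0k t)] at hG
              exact hG
            have hct : (0:ℝ) < c ^ t := Real.rpow_pos_of_pos hc t
            have hbt : (0:ℝ) < (q^k)^t := Real.rpow_pos_of_pos hq0k t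
            have hh : ((1:ℝ)/2)^n ≤ 1 := pow_le_one₀ (by norm_num) (by norm_num)
            rw [hmr, ← Real.rpow_natCast (q^k) n]
            have h0 : (0:ℝ) ≤ 1 - (1/2:ℝ)^n := by linarith
            have heq : (c ^ t * (q ^ k) ^ t)⁻¹ * ((q ^ k) ^ (n:ℝ) * (1 - (1/2:ℝ)^n))
                = ((1 - (1/2:ℝ)^n) * ((q^k)^(n:ℝ)/(q^k)^t)) / c^t := by
              field_simp
            rw [heq]
            gcongr
            exact le_mul_of_one_le_right h0 hG
        _ ≤ (ENNReal.ofReal (ρ k ^ t))⁻¹ * volume (A k) :=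
            mul_le_mul_right hvol _
        _ = ∫⁻ _ in A k, (ENNReal.ofReal (ρ k ^ t))⁻¹ ∂volume := by
            rw [setLIntegral_const]
        _ ≤ ∫⁻ x in A k, (ENNReal.ofReal (‖x‖ ^ t))⁻¹ ∂volume :=
            setLIntegral_mono hfm hptwise
    have : (⊤:ℝ≥0∞) ≤ ∫⁻ x in S, (ENNReal.ofReal (‖x‖ ^ t))⁻¹ ∂volume := by
      rw [hsplit]
      calc (⊤:ℝ≥0∞) = ∑' _ : ℕ, ε := (ENNReal.tsum_const_eq_top_of_ne_zero hε0).symm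
        _ ≤ _ := ENNReal.tsum_le_tsum hlowk
    exact absurd (lt_of_le_of_lt this hfin) (lt_irrefl _)
  · -- t < n implies finiteness
    intro htn
    rw [hsplit]
    set w : ℝ := q ^ ((n:ℝ) - t) with hwdef
    have hw0 : 0 < w := Real.rpow_pos_of_pos hq0 _
    have hw1 : w < 1 := Real.rpow_lt_one hq0.le hq1 (by linarith)
    set C0 : ℝ := (2*c)^n / (c*q) ^ t with hC0def
    have hupk : ∀ k, (∫⁻ x in A k, (ENNReal.ofReal (‖x‖ ^ t))⁻¹ ∂volume)
        ≤ ENNReal.ofReal C0 * (ENNReal.ofReal w) ^ k := by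
      intro k
      have hq0k : (0:ℝ) < q ^ k := by positivity
      have hptwise : ∀ x ∈ A k, (ENNReal.ofReal (‖x‖ ^ t))⁻¹ ≤ (ENNReal.ofReal (ρ (k+1) ^ t))⁻¹ := by
        intro x hx
        apply ENNReal.inv_le_inv'
        exact ENNReal.ofReal_le_ofReal (Real.rpow_le_rpow (hρ0 (k+1)).le hx.2.1.le ht.le)
      have e2 : ρ (k+1) ^ t = (c*q)^t * (q^k)^t := by
        rw [hρdef]; simp only []
        rw [pow_succ, show c * (q^k * q) = (c*q)*(q^k) by ring,
          Real.mul_rpow (by positivity) (by positivity)]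
      have e3 : w ^ k = (q^k) ^ ((n:ℝ) - t) := by
        rw [hwdef, ← Real.rpow_natCast (q ^ ((n:ℝ) - t)) k, ← Real.rpow_mul hq0.le,
          ← Real.rpow_natCast q k, ← Real.rpow_mul hq0.le, mul_comm]
      have e4 : (q^k)^((n:ℝ)-t) = (q^k)^(n:ℝ) / (q^k)^t := Real.rpow_sub hq0k _ _
      calc (∫⁻ x in A k, (ENNReal.ofReal (‖x‖ ^ t))⁻¹ ∂volume)
          ≤ ∫⁻ _ in A k, (ENNReal.ofReal (ρ (k+1) ^ t))⁻¹ ∂volume :=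
            setLIntegral_mono measurable_const hptwise
        _ = (ENNReal.ofReal (ρ (k+1) ^ t))⁻¹ * volume (A k) := setLIntegral_const _ _
        _ ≤ (ENNReal.ofReal (ρ (k+1) ^ t))⁻¹ * ENNReal.ofReal ((2 * ρ k)^n) := by
            apply mul_le_mul_right
            refine (measure_mono (fun x hx => ?_)).trans (vol_norm_le S _ (hρ0 _).le)
            exact Set.mem_sep hx.1 hx.2.2
        _ = ENNReal.ofReal ((ρ (k+1) ^ t)⁻¹ * (2 * ρ k)^n) := by
            rw [ENNReal.ofReal_mul (by positivity), ENNReal.ofReal_inv_of_pos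
              (Real.rpow_pos_of_pos (hρ0 _) t)]
        _ = ENNReal.ofReal (C0 * w ^ k) := by
            congr 1
            rw [e2, e3, e4, hC0def, hρdef]
            simp only []
            rw [show (2 * (c * q^k))^n = (2*c)^n * (q^k)^n by rw [← mul_pow]; ring_nf,
              ← Real.rpow_natCast (q^k) n]
            have h1 : ((c*q)^t : ℝ) ≠ 0 := (Real.rpow_pos_of_pos (by positivity) t).ne'
            have h2 : ((q^k)^t : ℝ) ≠ 0 := (Real.rpow_pos_of_pos hq0k t).ne'
            field_simp
        _ ≤ ENNReal.ofReal C0 * (ENNReal.ofReal w) ^ k := by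
            rw [ENNReal.ofReal_mul (by positivity), ENNReal.ofReal_pow hw0.le]
    calc (∑' k, ∫⁻ x in A k, (ENNReal.ofReal (‖x‖ ^ t))⁻¹ ∂volume)
        ≤ ∑' k, ENNReal.ofReal C0 * (ENNReal.ofReal w) ^ k := ENNReal.tsum_le_tsum hupk
      _ = ENNReal.ofReal C0 * (1 - ENNReal.ofReal w)⁻¹ := by
          rw [ENNReal.tsum_mul_left, ENNReal.tsum_geometric]
      _ < ⊤ := by
          apply ENNReal.mul_lt_top ENNReal.ofReal_lt_top
          rw [lt_top_iff_ne_top]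
          intro h
          have h1 : (1:ℝ≥0∞) - ENNReal.ofReal w = 0 := by
            simpa using ENNReal.inv_eq_top.mp h
          have h2 : (1:ℝ≥0∞) ≤ ENNReal.ofReal w := tsub_eq_zero_iff_le.mp h1
          exact absurd (lt_of_le_of_lt h2 (ENNReal.ofReal_lt_one.mpr hw1)) (lt_irrefl _)

lemma cross_fin (hn : 1 ≤ n) {s : ℝ} (hs : 0 < s) (hs2 : s < 2*n)
    (A B : Set (E n)) (hAm : MeasurableSet A) (hBm : MeasurableSet B)
    (hAlow : ∀ r : ℝ, 0 ≤ r → r ≤ 1 →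
      ENNReal.ofReal (r^n) ≤ volume {x ∈ A | ‖x‖ ≤ Real.sqrt n * r})
    (hBlow : ∀ r : ℝ, 0 ≤ r → r ≤ 1 →
      ENNReal.ofReal (r^n) ≤ volume {x ∈ B | ‖x‖ ≤ Real.sqrt n * r})
    (hAbdd : ∀ x ∈ A, ‖x‖ ≤ Real.sqrt n) (hBbdd : ∀ x ∈ B, ‖x‖ ≤ Real.sqrt n)
    (hd : ∀ x ∈ A, ∀ y ∈ B, ‖x‖ ≤ dist x y ∧ ‖y‖ ≤ dist x y) :
    (∫⁻ x in A, ∫⁻ y in B, (ENNReal.ofReal (dist x y ^ s))⁻¹ ∂volume ∂volume) < ⊤ := by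
  set a : ℝ := s/2 with hadef
  have ha0 : 0 < a := by positivity
  have han : a < n := by rw [hadef]; linarith
  have hgm : Measurable (fun x : E n => (ENNReal.ofReal (‖x‖ ^ a))⁻¹) :=
    (((Real.continuous_rpow_const ha0.le).comp continuous_norm).measurable.ennreal_ofReal).inv
  have hKA := (core hn ha0 A hAm hAlow hAbdd).mpr han
  have hKB := (core hn ha0 B hBm hBlow hBbdd).mpr han
  have hpt : ∀ x ∈ A, ∀ y ∈ B, (ENNReal.ofReal (dist x y ^ s))⁻¹
      ≤ (ENNReal.ofReal (‖x‖ ^ a))⁻¹ * (ENNReal.ofReal (‖y‖ ^ a))⁻¹ := by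
    intro x hx y hy
    obtain ⟨h1, h2⟩ := hd x hx y hy
    rcases eq_or_lt_of_le (dist_nonneg : (0:ℝ) ≤ dist x y) with hd0 | hd0
    · -- dist = 0, then ‖x‖ = 0 and RHS = ⊤
      have hx0 : ‖x‖ = 0 := le_antisymm (h1.trans hd0.symm.le) (norm_nonneg x)
      have : (ENNReal.ofReal (‖x‖ ^ a))⁻¹ = ⊤ := by
        rw [hx0, Real.zero_rpow ha0.ne', ENNReal.ofReal_zero, ENNReal.inv_zero]
      rw [this]
      simp
    · have hmul : ENNReal.ofReal (‖x‖ ^ a) * ENNReal.ofReal (‖y‖ ^ a)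
          ≤ ENNReal.ofReal (dist x y ^ s) := by
        rw [← ENNReal.ofReal_mul (Real.rpow_nonneg (norm_nonneg x) a)]
        apply ENNReal.ofReal_le_ofReal
        calc ‖x‖ ^ a * ‖y‖ ^ a ≤ dist x y ^ a * dist x y ^ a :=
              mul_le_mul (Real.rpow_le_rpow (norm_nonneg x) h1 ha0.le)
                (Real.rpow_le_rpow (norm_nonneg y) h2 ha0.le)
                (Real.rpow_nonneg (norm_nonneg y) a) (Real.rpow_nonneg dist_nonneg a)
          _ = dist x y ^ s := by
              rw [← Real.rpow_add hd0]
              congr 1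
              rw [hadef]; ring
      calc (ENNReal.ofReal (dist x y ^ s))⁻¹
          ≤ (ENNReal.ofReal (‖x‖ ^ a) * ENNReal.ofReal (‖y‖ ^ a))⁻¹ := ENNReal.inv_le_inv' hmul
        _ = (ENNReal.ofReal (‖x‖ ^ a))⁻¹ * (ENNReal.ofReal (‖y‖ ^ a))⁻¹ :=
            ENNReal.mul_inv (Or.inr ENNReal.ofReal_ne_top) (Or.inl ENNReal.ofReal_ne_top)
  calc (∫⁻ x in A, ∫⁻ y in B, (ENNReal.ofReal (dist x y ^ s))⁻¹ ∂volume ∂volume)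
      ≤ ∫⁻ x in A, (ENNReal.ofReal (‖x‖ ^ a))⁻¹ * ∫⁻ y in B, (ENNReal.ofReal (‖y‖ ^ a))⁻¹ ∂volume ∂volume := by
        apply setLIntegral_mono' hAm
        intro x hx
        rw [← lintegral_const_mul _ hgm]
        exact setLIntegral_mono' hBm (fun y hy => hpt x hx y hy)
    _ = (∫⁻ y in B, (ENNReal.ofReal (‖y‖ ^ a))⁻¹ ∂volume) * ∫⁻ x in A, (ENNReal.ofReal (‖x‖ ^ a))⁻¹ ∂volume := by
        rw [lintegral_mul_const' _ _ hKB.ne]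
        ring
    _ < ⊤ := ENNReal.mul_lt_top hKB hKA

lemma cross_inf (hn : 1 ≤ n) {s : ℝ} (hs2 : 2*n ≤ s)
    (A B : Set (E n)) (hAm : MeasurableSet A) (hBm : MeasurableSet B)
    (hAlow : ∀ r : ℝ, 0 ≤ r → r ≤ 1 →
      ENNReal.ofReal (r^n) ≤ volume {x ∈ A | ‖x‖ ≤ Real.sqrt n * r})
    (hBlow : ∀ r : ℝ, 0 ≤ r → r ≤ 1 →
      ENNReal.ofReal (r^n) ≤ volume {x ∈ B | ‖x‖ ≤ Real.sqrt n * r})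
    (hAbdd : ∀ x ∈ A, ‖x‖ ≤ Real.sqrt n) :
    (∫⁻ x in A, ∫⁻ y in B, (ENNReal.ofReal (dist x y ^ s))⁻¹ ∂volume ∂volume) = ⊤ := by
  have hn0 : (0:ℝ) < n := by exact_mod_cast hn
  have hc : (0:ℝ) < Real.sqrt n := Real.sqrt_pos.mpr hn0
  set c : ℝ := Real.sqrt n with hcdef
  set t : ℝ := s - n with htdef
  have ht0 : 0 < t := by rw [htdef]; linarith
  have htn : (n:ℝ) ≤ t := by rw [htdef]; linarith
  have hs : (0:ℝ) < s := by linarith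
  set κ : ℝ := (c^n * 2^s)⁻¹ with hκdef
  have h2s : (0:ℝ) < (2:ℝ)^s := Real.rpow_pos_of_pos (by norm_num) s
  have hκ0 : 0 < κ := by rw [hκdef]; positivity
  set A' : Set (E n) := A \ {x | ‖x‖ = 0} with hA'def
  have hA'm : MeasurableSet A' := hAm.diff (measurable_norm (measurableSet_singleton 0))
  have hA'ae : A' =ᵐ[volume] A := by
    rw [MeasureTheory.ae_eq_set]
    constructor
    · simp [hA'def]
    · have hz : volume {x : E n | ‖x‖ = 0} = 0 := by
        have hsub : {x : E n | ‖x‖ = 0} ⊆ {x : E n | ∀ i, x i ∈ Set.Icc ((fun _ => (0:ℝ)) i) ((fun _ => (0:ℝ)) i)} := by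
          intro x hx i
          have : x = 0 := norm_eq_zero.mp hx
          simp [this]
        refine measure_mono_null hsub ?_
        rw [volume_box]
        simp [Finset.prod_const, zero_pow (by omega : n ≠ 0)]
      exact measure_mono_null
        (fun x hx => show ‖x‖ = 0 by by_contra h; exact hx.2 ⟨hx.1, h⟩) hz
  have hm1 : Measurable (fun x : E n => (ENNReal.ofReal (‖x‖ ^ t))⁻¹) :=
    (((Real.continuous_rpow_const ht0.le).comp continuous_norm).measurable.ennreal_ofReal).inv
  have hcore : (∫⁻ x in A, (ENNReal.ofReal (‖x‖ ^ t))⁻¹ ∂volume) = ⊤ := by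
    have hiff := core hn ht0 A hAm hAlow hAbdd
    rw [lt_top_iff_ne_top] at hiff
    by_contra hne
    exact absurd (hiff.mp hne) (not_lt.mpr htn)
  have hinner : ∀ x ∈ A', ENNReal.ofReal κ * (ENNReal.ofReal (‖x‖ ^ t))⁻¹
      ≤ ∫⁻ y in B, (ENNReal.ofReal (dist x y ^ s))⁻¹ ∂volume := by
    intro x hx
    have hx0 : 0 < ‖x‖ := lt_of_le_of_ne (norm_nonneg x) (Ne.symm (by exact fun h => hx.2 h))
    have hxc : ‖x‖ ≤ c := hAbdd x hx.1
    -- volume of small ball piece of B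
    have hvol : ENNReal.ofReal ((‖x‖/c)^n) ≤ volume {y ∈ B | ‖y‖ ≤ ‖x‖} := by
      have := hBlow (‖x‖/c) (by positivity) (by rw [div_le_one hc]; exact hxc)
      have heq : c * (‖x‖ / c) = ‖x‖ := by field_simp
      rwa [heq] at this
    have hpt : ∀ y ∈ {y ∈ B | ‖y‖ ≤ ‖x‖}, (ENNReal.ofReal ((2*‖x‖) ^ s))⁻¹
        ≤ (ENNReal.ofReal (dist x y ^ s))⁻¹ := by
      intro y hy
      apply ENNReal.inv_le_inv'
      apply ENNReal.ofReal_le_ofReal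
      apply Real.rpow_le_rpow dist_nonneg _ hs.le
      calc dist x y ≤ ‖x‖ + ‖y‖ := by rw [dist_eq_norm]; exact norm_sub_le x y
        _ ≤ 2 * ‖x‖ := by linarith [hy.2]
    calc ENNReal.ofReal κ * (ENNReal.ofReal (‖x‖ ^ t))⁻¹
        ≤ (ENNReal.ofReal ((2*‖x‖) ^ s))⁻¹ * ENNReal.ofReal ((‖x‖/c)^n) := by
          rw [← ENNReal.ofReal_inv_of_pos (Real.rpow_pos_of_pos hx0 t),
            ← ENNReal.ofReal_inv_of_pos (Real.rpow_pos_of_pos (by linarith) s),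
            ← ENNReal.ofReal_mul (by positivity), ← ENNReal.ofReal_mul (by positivity)]
          apply ENNReal.ofReal_le_ofReal
          have e1 : (2*‖x‖)^s = 2^s * ‖x‖^s := Real.mul_rpow (by norm_num) (norm_nonneg x)
          have e2 : ((‖x‖/c):ℝ)^n = ‖x‖^(n:ℝ) / c^n := by
            rw [div_pow, ← Real.rpow_natCast ‖x‖ n]
          have e3 : ‖x‖^(n:ℝ) / ‖x‖^s = (‖x‖^t)⁻¹ := by
            rw [← Real.rpow_sub hx0]
            rw [show (n:ℝ) - s = -t by rw [htdef]; ring, Real.rpow_neg (norm_nonneg x)]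
          have hxs : (0:ℝ) < ‖x‖^s := Real.rpow_pos_of_pos hx0 s
          have hxt : (0:ℝ) < ‖x‖^t := Real.rpow_pos_of_pos hx0 t
          have hcn : (0:ℝ) < c^n := by positivity
          apply le_of_eq
          rw [hκdef, e1, e2, ← e3]
          field_simp
      _ ≤ (ENNReal.ofReal ((2*‖x‖) ^ s))⁻¹ * volume {y ∈ B | ‖y‖ ≤ ‖x‖} :=
          mul_le_mul_right hvol _
      _ = ∫⁻ _ in {y ∈ B | ‖y‖ ≤ ‖x‖}, (ENNReal.ofReal ((2*‖x‖) ^ s))⁻¹ ∂volume :=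
          (setLIntegral_const _ _).symm
      _ ≤ ∫⁻ y in {y ∈ B | ‖y‖ ≤ ‖x‖}, (ENNReal.ofReal (dist x y ^ s))⁻¹ ∂volume :=
          setLIntegral_mono' (hBm.inter (measurable_norm measurableSet_Iic)) hpt
      _ ≤ ∫⁻ y in B, (ENNReal.ofReal (dist x y ^ s))⁻¹ ∂volume :=
          lintegral_mono_set (fun y hy => hy.1)
  have hgm : Measurable (fun x : E n => ENNReal.ofReal κ * (ENNReal.ofReal (‖x‖ ^ t))⁻¹) :=
    ((((Real.continuous_rpow_const ht0.le).comp continuous_norm).measurable.ennreal_ofReal).inv).const_mul _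
  rw [eq_top_iff]
  calc (⊤:ℝ≥0∞) = ENNReal.ofReal κ * ∫⁻ x in A, (ENNReal.ofReal (‖x‖ ^ t))⁻¹ ∂volume := by
        rw [hcore, ENNReal.mul_top (ENNReal.ofReal_pos.mpr hκ0).ne']
    _ = ENNReal.ofReal κ * ∫⁻ x in A', (ENNReal.ofReal (‖x‖ ^ t))⁻¹ ∂volume := by
        rw [setLIntegral_congr hA'ae]
    _ = ∫⁻ x in A', ENNReal.ofReal κ * (ENNReal.ofReal (‖x‖ ^ t))⁻¹ ∂volume := by
        rw [lintegral_const_mul _ hm1]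
    _ ≤ ∫⁻ x in A', ∫⁻ y in B, (ENNReal.ofReal (dist x y ^ s))⁻¹ ∂volume ∂volume :=
        setLIntegral_mono' hA'm hinner
    _ ≤ ∫⁻ x in A, ∫⁻ y in B, (ENNReal.ofReal (dist x y ^ s))⁻¹ ∂volume ∂volume :=
        lintegral_mono_set (fun x hx => hx.1)

section Cubes

lemma measP : MeasurableSet (cubeP n) := meas_box (fun _ => (0:ℝ)) (fun _ => (1:ℝ))
lemma measN : MeasurableSet (cubeN n) := meas_box (fun _ => (-1:ℝ)) (fun _ => (0:ℝ))

lemma hbddP : ∀ x ∈ cubeP n, ‖x‖ ≤ Real.sqrt n := by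
  intro x hx
  have := norm_le_sqrt_mul (r := 1) one_pos.le (fun i => abs_le.mpr ⟨by linarith [(hx i).1], (hx i).2⟩)
  simpa using this

lemma hbddN : ∀ x ∈ cubeN n, ‖x‖ ≤ Real.sqrt n := by
  intro x hx
  have := norm_le_sqrt_mul (r := 1) one_pos.le (fun i => abs_le.mpr ⟨(hx i).1, by linarith [(hx i).2]⟩)
  simpa using this

lemma hlowP : ∀ r : ℝ, 0 ≤ r → r ≤ 1 →
    ENNReal.ofReal (r^n) ≤ volume {x ∈ cubeP n | ‖x‖ ≤ Real.sqrt n * r} := by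
  intro r hr0 hr1
  have hsub : {x : E n | ∀ i, x i ∈ Set.Icc ((fun _ => (0:ℝ)) i) ((fun _ => r) i)}
      ⊆ {x ∈ cubeP n | ‖x‖ ≤ Real.sqrt n * r} := by
    intro x hx
    have hx' : ∀ i, (0:ℝ) ≤ x i ∧ x i ≤ r := fun i => ⟨(hx i).1, (hx i).2⟩
    refine ⟨fun i => ⟨(hx' i).1, (hx' i).2.trans hr1⟩, ?_⟩
    exact norm_le_sqrt_mul hr0 (fun i => abs_le.mpr ⟨by linarith [(hx' i).1], (hx' i).2⟩)
  calc ENNReal.ofReal (r^n) = volume {x : E n | ∀ i, x i ∈ Set.Icc ((fun _ => (0:ℝ)) i) ((fun _ => r) i)} := by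
        rw [volume_box]; simp [Finset.prod_const, ← ENNReal.ofReal_pow hr0]
    _ ≤ _ := measure_mono hsub

lemma hlowN : ∀ r : ℝ, 0 ≤ r → r ≤ 1 →
    ENNReal.ofReal (r^n) ≤ volume {x ∈ cubeN n | ‖x‖ ≤ Real.sqrt n * r} := by
  intro r hr0 hr1
  have hsub : {x : E n | ∀ i, x i ∈ Set.Icc ((fun _ => -r) i) ((fun _ => (0:ℝ)) i)}
      ⊆ {x ∈ cubeN n | ‖x‖ ≤ Real.sqrt n * r} := by
    intro x hx
    have hx' : ∀ i, -r ≤ x i ∧ x i ≤ (0:ℝ) := fun i => ⟨(hx i).1, (hx i).2⟩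
    refine ⟨fun i => ⟨by linarith [(hx' i).1], (hx' i).2⟩, ?_⟩
    exact norm_le_sqrt_mul hr0 (fun i => abs_le.mpr ⟨(hx' i).1, by linarith [(hx' i).2]⟩)
  calc ENNReal.ofReal (r^n) = volume {x : E n | ∀ i, x i ∈ Set.Icc ((fun _ => -r) i) ((fun _ => (0:ℝ)) i)} := by
        rw [volume_box]; simp [Finset.prod_const, ← ENNReal.ofReal_pow hr0]
    _ ≤ _ := measure_mono hsub

lemma hdistPN : ∀ x ∈ cubeP n, ∀ y ∈ cubeN n, ‖x‖ ≤ dist x y ∧ ‖y‖ ≤ dist x y := by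
  intro x hx y hy
  have key : ∀ i, ‖x i‖^2 ≤ dist (x i) (y i)^2 ∧ ‖y i‖^2 ≤ dist (x i) (y i)^2 := by
    intro i
    have h1 : (0:ℝ) ≤ x i := (hx i).1
    have h2 : x i ≤ (0:ℝ) + 1 := by have := (hx i).2; linarith
    have h3 : y i ≤ (0:ℝ) := (hy i).2
    have h4 : (-1:ℝ) ≤ y i := (hy i).1
    rw [Real.dist_eq, Real.norm_eq_abs, Real.norm_eq_abs]
    constructor
    · apply pow_le_pow_left₀ (abs_nonneg _) _ 2
      rw [abs_of_nonneg h1, abs_of_nonneg (by linarith : 0 ≤ x i - y i)]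
      linarith
    · apply pow_le_pow_left₀ (abs_nonneg _) _ 2
      rw [abs_of_nonpos h3, abs_of_nonneg (by linarith : 0 ≤ x i - y i)]
      linarith
  rw [EuclideanSpace.norm_eq, EuclideanSpace.norm_eq, EuclideanSpace.dist_eq]
  constructor
  · exact Real.sqrt_le_sqrt (Finset.sum_le_sum (fun i _ => (key i).1))
  · exact Real.sqrt_le_sqrt (Finset.sum_le_sum (fun i _ => (key i).2))

lemma sub_apply' (y x : E n) (i : Fin n) : (y - x) i = y i - x i := rfl

lemma ball_upper (x : E n) {d : ℝ} (hd : 0 ≤ d) :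
    volume (ball x d) ≤ ENNReal.ofReal ((2*d)^n) := by
  have hsub : ball x d ⊆ {y : E n | ∀ i, y i ∈ Set.Icc ((fun i => x i - d) i) ((fun i => x i + d) i)} := by
    intro y hy i
    have h1 : |y i - x i| ≤ d := by
      have := (abs_le_norm (y - x) i).trans (le_of_lt (mem_ball_iff_norm.mp hy))
      simpa [sub_apply'] using this
    have h2 := abs_le.mp h1
    exact ⟨show x i - d ≤ y i by linarith [h2.1], show y i ≤ x i + d by linarith [h2.2]⟩
  calc volume (ball x d) ≤ _ := measure_mono hsub
    _ = ENNReal.ofReal ((2*d)^n) := by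
        rw [volume_box]
        have : ∀ i : Fin n, (x i + d) - (x i - d) = 2*d := fun i => by ring
        simp only [this]
        rw [Finset.prod_const, ← ENNReal.ofReal_pow (by linarith)]
        simp

lemma cube_ball_lower (lo : ℝ) (x : E n) (hx : ∀ i, x i ∈ Set.Icc lo (lo+1)) {d : ℝ}
    (hd0 : 0 < d) (hd : d ≤ 2*Real.sqrt n) (hn : 1 ≤ n) :
    ENNReal.ofReal ((d/(4*Real.sqrt n))^n)
      ≤ volume (ball x d ∩ {y : E n | ∀ i, y i ∈ Set.Icc lo (lo+1)}) := by
  have hc : (0:ℝ) < Real.sqrt n := Real.sqrt_pos.mpr (by exact_mod_cast hn)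
  set c := Real.sqrt n with hcdef
  set ℓ : ℝ := min (d/(2*c)) (1/2) with hℓdef
  have hℓ0 : 0 < ℓ := lt_min (by positivity) (by norm_num)
  have hℓhalf : ℓ ≤ 1/2 := min_le_right _ _
  have hℓd : ℓ ≥ d/(4*c) := by
    rcases min_cases (d/(2*c)) (1/2:ℝ) with ⟨h, _⟩ | ⟨h, h2⟩
    · rw [hℓdef, h]
      apply div_le_div_of_nonneg_left hd0.le (by positivity) (by linarith)
    · rw [hℓdef, h, ge_iff_le, div_le_iff₀ (by positivity)]
      linarith
  have hcℓ : c * ℓ < d := by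
    calc c * ℓ ≤ c * (d/(2*c)) := by
          apply mul_le_mul_of_nonneg_left (min_le_left _ _) hc.le
      _ = d/2 := by field_simp
      _ < d := by linarith
  set a : Fin n → ℝ := fun i => if x i ≤ lo + 1/2 then x i else x i - ℓ with hadef
  have hsub : {y : E n | ∀ i, y i ∈ Set.Icc (a i) (a i + ℓ)}
      ⊆ ball x d ∩ {y : E n | ∀ i, y i ∈ Set.Icc lo (lo+1)} := by
    intro y hy
    have habs : ∀ i, |y i - x i| ≤ ℓ := by
      intro i
      have h := hy i
      rw [hadef] at h
      by_cases hcase : x i ≤ lo + 1/2 <;> simp only [hcase, if_true, if_false, if_pos, if_neg, not_true, not_false_iff] at h <;> rw [abs_le] <;> constructor <;> first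
        | linarith [h.1, h.2]
    constructor
    · rw [mem_ball_iff_norm']
      calc ‖x - y‖ = ‖y - x‖ := norm_sub_rev x y
        _ ≤ c * ℓ := by
            apply norm_le_sqrt_mul hℓ0.le
            intro i
            rw [sub_apply']
            exact habs i
        _ < d := hcℓ
    · intro i
      have h := hy i
      rw [hadef] at h
      by_cases hcase : x i ≤ lo + 1/2
      · simp only [hcase, if_true] at h
        exact ⟨(hx i).1.trans h.1, by linarith [h.2]⟩
      · simp only [hcase, if_false] at h
        push_neg at hcase
        exact ⟨by linarith [h.1], by linarith [h.2, (hx i).2]⟩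
  calc ENNReal.ofReal ((d/(4*c))^n) ≤ ENNReal.ofReal (ℓ^n) := by
        apply ENNReal.ofReal_le_ofReal
        exact pow_le_pow_left₀ (by positivity) hℓd n
    _ = volume {y : E n | ∀ i, y i ∈ Set.Icc (a i) (a i + ℓ)} := by
        rw [volume_box]
        have : ∀ i : Fin n, (a i + ℓ) - a i = ℓ := fun i => by ring
        simp only [this]
        rw [Finset.prod_const, ← ENNReal.ofReal_pow hℓ0.le]
        simp
    _ ≤ _ := measure_mono hsub

end Cubes

section Main
variable {p θ : ℝ}

lemma split_total (hn : 2 ≤ n) (hp : 1 < p) (hθ : 0 < θ) {s : ℝ} (hs0 : 0 < s) :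
    (∫⁻ x in cubeP n ∪ cubeN n, ∫⁻ y in cubeP n ∪ cubeN n,
        ENNReal.ofReal (|(cubeP n).indicator (fun _ => (1:ℝ)) x -
            (cubeP n).indicator (fun _ => (1:ℝ)) y| ^ p) /
          ENNReal.ofReal (dist x y ^ s) ∂volume ∂volume)
      = (∫⁻ x in cubeP n, ∫⁻ y in cubeN n, (ENNReal.ofReal (dist x y ^ s))⁻¹ ∂volume ∂volume)
        + (∫⁻ x in cubeN n, ∫⁻ y in cubeP n, (ENNReal.ofReal (dist x y ^ s))⁻¹ ∂volume ∂volume) := by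
  have hp0 : (0:ℝ) < p := by linarith
  set u : E n → ℝ := (cubeP n).indicator (fun _ => (1:ℝ)) with hudef
  set G : E n → E n → ℝ≥0∞ := fun x y =>
    ENNReal.ofReal (|u x - u y| ^ p) / ENNReal.ofReal (dist x y ^ s) with hGdef
  set N' : Set (E n) := cubeN n \ cubeP n with hN'def
  have hN'm : MeasurableSet N' := measN.diff measP
  have hdisj : Disjoint (cubeP n) N' := disjoint_sdiff_self_right
  have hUeq : cubeP n ∪ cubeN n = cubeP n ∪ N' := (Set.union_diff_self).symm
  have hPN0 : volume (cubeP n ∩ cubeN n) = 0 := by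
    have hsub : cubeP n ∩ cubeN n ⊆ {x : E n | ∀ i, x i ∈ Set.Icc ((fun _ => (0:ℝ)) i) ((fun _ => (0:ℝ)) i)} := by
      rintro x ⟨h1, h2⟩ i
      have a1 : (0:ℝ) ≤ x i := (h1 i).1
      have a2 : x i ≤ (0:ℝ) := (h2 i).2
      exact ⟨a1, a2⟩
    refine measure_mono_null hsub ?_
    rw [volume_box]
    simp [Finset.prod_const, zero_pow (by omega : n ≠ 0)]
  have hN'ae : N' =ᵐ[volume] cubeN n := by
    rw [MeasureTheory.ae_eq_set]
    constructor
    · simp [hN'def]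
    · refine measure_mono_null (fun x hx => ?_) hPN0
      rcases hx with ⟨h1, h2⟩
      rw [hN'def, Set.mem_diff, not_and, not_not] at h2
      exact ⟨h2 h1, h1⟩
  have hu1 : ∀ x ∈ cubeP n, u x = 1 := fun x hx => Set.indicator_of_mem hx _
  have hu0 : ∀ x ∈ N', u x = 0 := fun x hx => Set.indicator_of_notMem hx.2 _
  have hum : Measurable u := measurable_const.indicator measP
  have hFm : Measurable (fun z : E n × E n => G z.1 z.2) := by
    apply Measurable.div
    · exact ((Real.continuous_rpow_const hp0.le).measurable.comp
        ((hum.comp measurable_fst).sub (hum.comp measurable_snd)).abs).ennreal_ofReal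
    · exact ((Real.continuous_rpow_const hs0.le).measurable.comp measurable_dist).ennreal_ofReal
  have hinnerPm : Measurable (fun x => ∫⁻ y in cubeP n, G x y ∂volume) :=
    Measurable.lintegral_prod_right (ν := volume.restrict (cubeP n)) hFm
  have hinnerN'm : Measurable (fun x => ∫⁻ y in N', G x y ∂volume) :=
    Measurable.lintegral_prod_right (ν := volume.restrict N') hFm
  have hGP : ∀ x ∈ cubeP n, ∀ y ∈ cubeP n, G x y = 0 := by
    intro x hx y hy
    rw [hGdef]
    simp only []
    rw [hu1 x hx, hu1 y hy, sub_self, abs_zero, Real.zero_rpow hp0.ne', ENNReal.ofReal_zero,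
      ENNReal.zero_div]
  have hGN : ∀ x ∈ N', ∀ y ∈ N', G x y = 0 := by
    intro x hx y hy
    rw [hGdef]
    simp only []
    rw [hu0 x hx, hu0 y hy, sub_self, abs_zero, Real.zero_rpow hp0.ne', ENNReal.ofReal_zero,
      ENNReal.zero_div]
  have hGPN : ∀ x ∈ cubeP n, ∀ y ∈ N', G x y = (ENNReal.ofReal (dist x y ^ s))⁻¹ := by
    intro x hx y hy
    rw [hGdef]
    simp only []
    rw [hu1 x hx, hu0 y hy, sub_zero, abs_one, Real.one_rpow, ENNReal.ofReal_one, one_div]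
  have hGNP : ∀ x ∈ N', ∀ y ∈ cubeP n, G x y = (ENNReal.ofReal (dist x y ^ s))⁻¹ := by
    intro x hx y hy
    rw [hGdef]
    simp only []
    rw [hu0 x hx, hu1 y hy, zero_sub, abs_neg, abs_one, Real.one_rpow, ENNReal.ofReal_one, one_div]
  show (∫⁻ x in cubeP n ∪ cubeN n, ∫⁻ y in cubeP n ∪ cubeN n, G x y ∂volume ∂volume) = _
  rw [hUeq]
  rw [lintegral_union hN'm hdisj]
  have hin : ∀ T : Set (E n), (∫⁻ x in T, ∫⁻ y in cubeP n ∪ N', G x y ∂volume ∂volume)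
      = (∫⁻ x in T, (∫⁻ y in cubeP n, G x y ∂volume) + (∫⁻ y in N', G x y ∂volume) ∂volume) := by
    intro T
    apply lintegral_congr
    intro x
    rw [lintegral_union hN'm hdisj]
  rw [hin, hin, lintegral_add_left hinnerPm, lintegral_add_left hinnerPm]
  have z1 : (∫⁻ x in cubeP n, ∫⁻ y in cubeP n, G x y ∂volume ∂volume) = 0 := by
    rw [setLIntegral_congr_fun_ae measP (ae_of_all _ (fun x hx => ?_)), lintegral_zero]
    rw [setLIntegral_congr_fun_ae measP (ae_of_all _ (fun y hy => hGP x hx y hy)), lintegral_zero]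
  have z2 : (∫⁻ x in N', ∫⁻ y in N', G x y ∂volume ∂volume) = 0 := by
    rw [setLIntegral_congr_fun_ae hN'm (ae_of_all _ (fun x hx => ?_)), lintegral_zero]
    rw [setLIntegral_congr_fun_ae hN'm (ae_of_all _ (fun y hy => hGN x hx y hy)), lintegral_zero]
  have e1 : (∫⁻ x in cubeP n, ∫⁻ y in N', G x y ∂volume ∂volume)
      = ∫⁻ x in cubeP n, ∫⁻ y in cubeN n, (ENNReal.ofReal (dist x y ^ s))⁻¹ ∂volume ∂volume := by
    apply setLIntegral_congr_fun_ae measP (ae_of_all _ (fun x hx => ?_))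
    rw [setLIntegral_congr_fun_ae hN'm (ae_of_all _ (fun y hy => hGPN x hx y hy)),
      setLIntegral_congr hN'ae]
  have e2 : (∫⁻ x in N', ∫⁻ y in cubeP n, G x y ∂volume ∂volume)
      = ∫⁻ x in cubeN n, ∫⁻ y in cubeP n, (ENNReal.ofReal (dist x y ^ s))⁻¹ ∂volume ∂volume := by
    rw [← setLIntegral_congr hN'ae]
    apply setLIntegral_congr_fun_ae hN'm (ae_of_all _ (fun x hx => ?_))
    exact setLIntegral_congr_fun_ae measP (ae_of_all _ (fun y hy => hGNP x hx y hy))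
  rw [z1, z2, e1, e2]
  ring

end Main

lemma total_iff (hn : 2 ≤ n) {p θ : ℝ} (hp : 1 < p) (hθ : 0 < θ) :
    (∫⁻ x in cubeP n ∪ cubeN n, ∫⁻ y in cubeP n ∪ cubeN n,
        ENNReal.ofReal (|(cubeP n).indicator (fun _ => (1:ℝ)) x -
            (cubeP n).indicator (fun _ => (1:ℝ)) y| ^ p) /
          ENNReal.ofReal (dist x y ^ ((n:ℝ) + θ * p)) ∂volume ∂volume) < ⊤ ↔ θ * p < n := by
  have hn1 : 1 ≤ n := by omega
  have hp0 : (0:ℝ) < p := by linarith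
  have hs0 : (0:ℝ) < (n:ℝ) + θ*p := by positivity
  rw [split_total hn hp hθ hs0]
  have hdistNP : ∀ x ∈ cubeN n, ∀ y ∈ cubeP n, ‖x‖ ≤ dist x y ∧ ‖y‖ ≤ dist x y := by
    intro x hx y hy
    have := hdistPN y hy x hx
    rw [dist_comm] at this
    exact ⟨this.2, this.1⟩
  constructor
  · intro h
    by_contra hc
    push_neg at hc
    have h2 : 2*(n:ℝ) ≤ (n:ℝ) + θ*p := by linarith
    rw [cross_inf hn1 h2 (cubeP n) (cubeN n) measP measN hlowP hlowN hbddP] at h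
    simp at h
  · intro h
    have h2 : (n:ℝ) + θ*p < 2*n := by linarith
    exact ENNReal.add_lt_top.mpr
      ⟨cross_fin hn1 hs0 h2 _ _ measP measN hlowP hlowN hbddP hbddN hdistPN,
       cross_fin hn1 hs0 h2 _ _ measN measP hlowN hlowP hbddN hbddP hdistNP⟩


lemma besov_iff (hn : 2 ≤ n) {p θ : ℝ} (hp : 1 < p) (hθ : 0 < θ) :
    besovEnergy (volume.restrict (cubeP n ∪ cubeN n)) p θ
        ((cubeP n).indicator fun _ => (1:ℝ)) < ⊤ ↔
    (∫⁻ x in cubeP n ∪ cubeN n, ∫⁻ y in cubeP n ∪ cubeN n,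
        ENNReal.ofReal (|(cubeP n).indicator (fun _ => (1:ℝ)) x -
            (cubeP n).indicator (fun _ => (1:ℝ)) y| ^ p) /
          ENNReal.ofReal (dist x y ^ ((n:ℝ) + θ * p)) ∂volume ∂volume) < ⊤ := by
  have hn1 : 1 ≤ n := by omega
  have hp0 : (0:ℝ) < p := by linarith
  have hs0 : (0:ℝ) < (n:ℝ) + θ*p := by positivity
  have hc : (0:ℝ) < Real.sqrt n := Real.sqrt_pos.mpr (by positivity)
  set c : ℝ := Real.sqrt n with hcdef
  set U : Set (E n) := cubeP n ∪ cubeN n with hUdef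
  have hUm : MeasurableSet U := measP.union measN
  set u : E n → ℝ := (cubeP n).indicator (fun _ => (1:ℝ)) with hudef
  set s : ℝ := (n:ℝ) + θ*p with hsdef
  set K1 : ℝ≥0∞ := ENNReal.ofReal ((1/(4*c))^n) with hK1def
  set K2 : ℝ≥0∞ := ENNReal.ofReal ((2:ℝ)^n) with hK2def
  have hK1pos : K1 ≠ 0 := (ENNReal.ofReal_pos.mpr (by positivity)).ne'
  have hK1top : K1 ≠ ⊤ := ENNReal.ofReal_ne_top
  have hK2pos : K2 ≠ 0 := (ENNReal.ofReal_pos.mpr (by positivity)).ne'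
  have hK2top : K2 ≠ ⊤ := ENNReal.ofReal_ne_top
  set μ : Measure (E n) := volume.restrict U with hμdef
  set G : E n → E n → ℝ≥0∞ := fun x y =>
    ENNReal.ofReal (|u x - u y| ^ p) / ENNReal.ofReal (dist x y ^ s) with hGdef
  set Fb : E n → E n → ℝ≥0∞ := fun x y =>
    ENNReal.ofReal (|u x - u y| ^ p) /
      (ENNReal.ofReal (dist x y ^ (θ * p)) * μ (ball x (dist x y))) with hFbdef
  have hbddU : ∀ x ∈ U, ‖x‖ ≤ c := by
    rintro x (hx | hx)
    · exact hbddP x hx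
    · exact hbddN x hx
  -- ball measure bounds
  have hball_up : ∀ (x : E n) (d : ℝ), 0 ≤ d → μ (ball x d) ≤ ENNReal.ofReal ((2*d)^n) := by
    intro x d hd
    rw [hμdef, Measure.restrict_apply measurableSet_ball]
    exact (measure_mono Set.inter_subset_left).trans (ball_upper x hd)
  have hball_low : ∀ x ∈ U, ∀ d : ℝ, 0 < d → d ≤ 2*c →
      ENNReal.ofReal ((d/(4*c))^n) ≤ μ (ball x d) := by
    intro x hx d hd0 hd2
    rw [hμdef, Measure.restrict_apply measurableSet_ball]
    rcases hx with hxP | hxN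
    · refine le_trans (cube_ball_lower 0 x (fun i => by rw [zero_add]; exact hxP i) hd0 hd2 hn1)
        (measure_mono ?_)
      rintro y ⟨hy1, hy2⟩
      exact ⟨hy1, Or.inl (fun i => by have := hy2 i; rwa [zero_add] at this)⟩
    · refine le_trans (cube_ball_lower (-1) x (fun i => by rw [neg_add_cancel]; exact hxN i) hd0 hd2 hn1)
        (measure_mono ?_)
      rintro y ⟨hy1, hy2⟩
      exact ⟨hy1, Or.inr (fun i => by have := hy2 i; rwa [neg_add_cancel] at this)⟩
  -- pointwise comparison
  have hcomp : ∀ x ∈ U, ∀ y ∈ U,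
      K2⁻¹ * G x y ≤ Fb x y ∧ Fb x y ≤ K1⁻¹ * G x y := by
    intro x hx y hy
    rcases eq_or_lt_of_le (dist_nonneg : (0:ℝ) ≤ dist x y) with hd0 | hd0
    · -- x = y
      have hxy : x = y := by
        have := dist_eq_zero.mp hd0.symm
        exact this
      subst hxy
      have hnum : ENNReal.ofReal (|u x - u x| ^ p) = 0 := by
        rw [sub_self, abs_zero, Real.zero_rpow hp0.ne', ENNReal.ofReal_zero]
      constructor
      · rw [hGdef]; simp only []; rw [hnum, ENNReal.zero_div, mul_zero, hFbdef]
        simp only []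
        rw [hnum, ENNReal.zero_div]
      · rw [hGdef, hFbdef]; simp only []; rw [hnum, ENNReal.zero_div, ENNReal.zero_div, mul_zero]
    · set d : ℝ := dist x y with hddef
      have hd2c : d ≤ 2*c := by
        calc d ≤ ‖x‖ + ‖y‖ := by rw [hddef, dist_eq_norm]; exact norm_sub_le x y
          _ ≤ 2*c := by linarith [hbddU x hx, hbddU y hy]
      have hDeq : ENNReal.ofReal (d ^ (θ*p)) * ENNReal.ofReal (d^((n:ℝ))) = ENNReal.ofReal (d^s) := by
        rw [← ENNReal.ofReal_mul (Real.rpow_nonneg hd0.le _), ← Real.rpow_add hd0, hsdef,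
          add_comm]
      have hup : ENNReal.ofReal (d ^ (θ * p)) * μ (ball x d) ≤ K2 * ENNReal.ofReal (d^s) := by
        calc ENNReal.ofReal (d ^ (θ * p)) * μ (ball x d)
            ≤ ENNReal.ofReal (d ^ (θ * p)) * ENNReal.ofReal ((2*d)^n) :=
              mul_le_mul_right (hball_up x d hd0.le) _
          _ = K2 * ENNReal.ofReal (d^s) := by
              rw [mul_pow, ENNReal.ofReal_mul (by positivity), hK2def, ← Real.rpow_natCast d n]
              rw [mul_comm (ENNReal.ofReal ((2:ℝ)^n)) _, ← mul_assoc, hDeq]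
              ring
      have e : ((d/(4*c)):ℝ)^n = d^n * (1/(4*c))^n := by
        rw [show d/(4*c) = d * (1/(4*c)) by ring, mul_pow]
      have hdivmul : ∀ (a b K : ℝ≥0∞), K ≠ 0 → K ≠ ⊤ → a / (K * b) = K⁻¹ * (a / b) := by
        intro a b K hK0 hKtop
        rw [div_eq_mul_inv, div_eq_mul_inv, ENNReal.mul_inv (Or.inl hK0) (Or.inl hKtop)]
        ring
      have hlow : K1 * ENNReal.ofReal (d^s) ≤ ENNReal.ofReal (d ^ (θ * p)) * μ (ball x d) := by
        have key : K1 * ENNReal.ofReal (d^s)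
            = ENNReal.ofReal (d ^ (θ * p)) * ENNReal.ofReal ((d/(4*c))^n) := by
          calc K1 * ENNReal.ofReal (d^s)
              = (ENNReal.ofReal (d^(θ*p)) * ENNReal.ofReal (d^((n:ℝ)))) * K1 := by
                rw [hDeq]; ring
            _ = ENNReal.ofReal (d^(θ*p)) * (ENNReal.ofReal (d^((n:ℝ))) * K1) := mul_assoc _ _ _
            _ = ENNReal.ofReal (d ^ (θ * p)) * ENNReal.ofReal ((d/(4*c))^n) := by
                rw [hK1def, ← ENNReal.ofReal_mul (Real.rpow_nonneg hd0.le _)]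
                congr 2
                rw [e, Real.rpow_natCast]
        rw [key]
        exact mul_le_mul_right (hball_low x hx d hd0 hd2c) _
      constructor
      · rw [hGdef, hFbdef]
        simp only []
        rw [← hddef]
        rw [← hdivmul _ _ _ hK2pos hK2top]
        exact ENNReal.div_le_div_left hup _
      · rw [hGdef, hFbdef]
        simp only []
        rw [← hddef]
        rw [← hdivmul _ _ _ hK1pos hK1top]
        exact ENNReal.div_le_div_left hlow _
  -- measurability of G in pairs
  have hum : Measurable u := measurable_const.indicator measP
  have hGm : Measurable (fun z : E n × E n => G z.1 z.2) := by
    apply Measurable.div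
    · exact ((Real.continuous_rpow_const hp0.le).measurable.comp
        ((hum.comp measurable_fst).sub (hum.comp measurable_snd)).abs).ennreal_ofReal
    · exact ((Real.continuous_rpow_const hs0.le).measurable.comp measurable_dist).ennreal_ofReal
  have hGinner : Measurable (fun x => ∫⁻ y in U, G x y ∂volume) :=
    Measurable.lintegral_prod_right (ν := volume.restrict U) hGm
  have hbes : besovEnergy μ p θ u = ∫⁻ x in U, ∫⁻ y in U, Fb x y ∂volume ∂volume := rfl
  have htot : (∫⁻ x in cubeP n ∪ cubeN n, ∫⁻ y in cubeP n ∪ cubeN n,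
        ENNReal.ofReal (|(cubeP n).indicator (fun _ => (1:ℝ)) x -
            (cubeP n).indicator (fun _ => (1:ℝ)) y| ^ p) /
          ENNReal.ofReal (dist x y ^ ((n:ℝ) + θ * p)) ∂volume ∂volume)
      = ∫⁻ x in U, ∫⁻ y in U, G x y ∂volume ∂volume := rfl
  rw [hbes, htot]
  have hK1invtop : K1⁻¹ ≠ ⊤ := ENNReal.inv_ne_top.mpr hK1pos
  have hK2invtop : K2⁻¹ ≠ ⊤ := ENNReal.inv_ne_top.mpr hK2pos
  have hupper : (∫⁻ x in U, ∫⁻ y in U, Fb x y ∂volume ∂volume)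
      ≤ K1⁻¹ * ∫⁻ x in U, ∫⁻ y in U, G x y ∂volume ∂volume := by
    calc (∫⁻ x in U, ∫⁻ y in U, Fb x y ∂volume ∂volume)
        ≤ ∫⁻ x in U, K1⁻¹ * ∫⁻ y in U, G x y ∂volume ∂volume := by
          apply setLIntegral_mono' hUm
          intro x hx
          rw [← lintegral_const_mul' _ _ hK1invtop]
          exact setLIntegral_mono' hUm (fun y hy => (hcomp x hx y hy).2)
      _ = K1⁻¹ * ∫⁻ x in U, ∫⁻ y in U, G x y ∂volume ∂volume :=
          lintegral_const_mul' _ _ hK1invtop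
  have hlower : K2⁻¹ * (∫⁻ x in U, ∫⁻ y in U, G x y ∂volume ∂volume)
      ≤ ∫⁻ x in U, ∫⁻ y in U, Fb x y ∂volume ∂volume := by
    calc K2⁻¹ * (∫⁻ x in U, ∫⁻ y in U, G x y ∂volume ∂volume)
        = ∫⁻ x in U, K2⁻¹ * ∫⁻ y in U, G x y ∂volume ∂volume :=
          (lintegral_const_mul' _ _ hK2invtop).symm
      _ ≤ ∫⁻ x in U, ∫⁻ y in U, Fb x y ∂volume ∂volume := by
          apply setLIntegral_mono' hUm
          intro x hx
          rw [← lintegral_const_mul' _ _ hK2invtop]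
          exact setLIntegral_mono' hUm (fun y hy => (hcomp x hx y hy).1)
  constructor
  · intro h
    by_contra hc
    rw [lt_top_iff_ne_top, not_ne_iff] at hc
    rw [hc, ENNReal.mul_top (ENNReal.inv_ne_zero.mpr hK2top)] at hlower
    exact absurd (lt_of_le_of_lt hlower h) (lt_irrefl _)
  · intro h
    exact lt_of_le_of_lt hupper (ENNReal.mul_lt_top (lt_top_iff_ne_top.mpr hK1invtop) h)


/-- For `X = [0,1]^n ∪ [-1,0]^n` glued at the origin with Lebesgue measure and
`E = [0,1]^n`, the Gagliardo-type energy `∫∫ |χ_E(x)-χ_E(y)|^p / |x-y|^{n+θp}` is finite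
iff `θp < n`; in particular `χ_E ∈ B^θ_{p,p}(X)` iff `θp < n`. -/
theorem statement16 (n : ℕ) (hn : 2 ≤ n) (p θ : ℝ) (hp : 1 < p) (hθ : 0 < θ) :
    ((∫⁻ x in cubeP n ∪ cubeN n, ∫⁻ y in cubeP n ∪ cubeN n,
        ENNReal.ofReal (|(cubeP n).indicator (fun _ => (1:ℝ)) x -
            (cubeP n).indicator (fun _ => (1:ℝ)) y| ^ p) /
          ENNReal.ofReal (dist x y ^ ((n:ℝ) + θ * p)) ∂volume ∂volume) < ⊤ ↔ θ * p < n) ∧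
    (MemBesov (volume.restrict (cubeP n ∪ cubeN n)) p θ
        ((cubeP n).indicator fun _ => (1:ℝ)) ↔ θ * p < n) := by
  refine ⟨total_iff hn hp hθ, ?_⟩
  have hmem : MemLp ((cubeP n).indicator fun _ => (1:ℝ)) (ENNReal.ofReal p)
      (volume.restrict (cubeP n ∪ cubeN n)) := by
    apply memLp_indicator_const _ measP
    right
    rw [Measure.restrict_apply measP]
    refine ((measure_mono Set.inter_subset_left).trans_lt ?_).ne
    rw [show (cubeP n : Set (E n)) = {x : E n | ∀ i, x i ∈ Set.Icc ((fun _ => (0:ℝ)) i)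
      ((fun _ => (1:ℝ)) i)} from rfl, volume_box]
    simp
  constructor
  · rintro ⟨_, hb⟩
    exact (total_iff hn hp hθ).mp ((besov_iff hn hp hθ).mp hb)
  · intro h
    exact ⟨hmem, (besov_iff hn hp hθ).mpr ((total_iff hn hp hθ).mpr h)⟩
end

section
/- Let n ≥ 2, X = [0,1]^n ∪ [-1,0]^n with Euclidean metric and Lebesgue measure ℒ^n, E = [0,1]^n, o the origin. Then for 1 < p < ∞ and θ > 0, there exist constants c, C > 0 such that for all sufficiently small r > 0: c r^{n-pθ} ≤ ∫_X ⨍_{B(x,r)} |χ_E(x)-χ_E(y)|^p / r^{pθ} dℒ^n(y) dℒ^n(x) ≤ C r^{n-pθ}. Consequently χ_E ∈ KS^θ_p(X) with ‖χ_E‖_{KS^θ_p(X)} = 0 if pθ < n, ‖χ_E‖_{KS^θ_p(X)} ∈ (0,∞) if pθ = n, and χ_E ∉ KS^θ_p(X) if pθ > n. -/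
open MeasureTheory Metric Filter ENNReal Topology

def s17cube (n : ℕ) (a b : ℝ) : Set (EuclideanSpace ℝ (Fin n)) := {x | ∀ i, x i ∈ Set.Icc a b}

lemma s17cube_vol (n : ℕ) (a b : ℝ) :
    volume (s17cube n a b) = ENNReal.ofReal (b - a) ^ n := by
  have h : s17cube n a b
      = (MeasurableEquiv.toLp 2 (Fin n → ℝ)).symm ⁻¹'
        (Set.univ.pi fun _ : Fin n => Set.Icc a b) := by
    ext x
    simp only [s17cube, Set.mem_setOf_eq, Set.mem_preimage, Set.mem_univ_pi]
    rfl
  rw [h, (EuclideanSpace.volume_preserving_symm_measurableEquiv_toLp (Fin n)).measure_preimage_equiv,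
    volume_pi_pi]
  simp [Real.volume_Icc]

lemma s17cube_closed (n : ℕ) (a b : ℝ) : IsClosed (s17cube n a b) := by
  have h : s17cube n a b = ⋂ i, (EuclideanSpace.proj (𝕜 := ℝ) (i : Fin n)) ⁻¹' Set.Icc a b := by
    ext x; simp [s17cube, EuclideanSpace.proj]
  rw [h]
  exact isClosed_iInter fun i => IsClosed.preimage (EuclideanSpace.proj i).continuous isClosed_Icc

lemma s17_dist {n : ℕ} (x y : EuclideanSpace ℝ (Fin n)) (h : ∀ i, x i * y i ≤ 0) :
    ‖x‖ ≤ dist x y := by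
  rw [EuclideanSpace.norm_eq, EuclideanSpace.dist_eq]
  apply Real.sqrt_le_sqrt
  apply Finset.sum_le_sum
  intro i _
  have h1 := h i
  simp only [Real.norm_eq_abs, sq_abs, Real.dist_eq]
  nlinarith

lemma s17_norm_le {n : ℕ} (a : ℝ) (ha : 0 ≤ a) (x : EuclideanSpace ℝ (Fin n))
    (h : ∀ i, |x i| ≤ a) : ‖x‖ ≤ a * Real.sqrt n := by
  rw [EuclideanSpace.norm_eq]
  have hs : ∑ i, ‖x i‖ ^ 2 ≤ (n : ℝ) * a ^ 2 := by
    calc ∑ i, ‖x i‖ ^ 2 ≤ ∑ _i : Fin n, a ^ 2 := by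
          apply Finset.sum_le_sum; intro i _
          have := h i
          simp only [Real.norm_eq_abs]
          nlinarith [abs_nonneg (x i)]
      _ = (n : ℝ) * a ^ 2 := by simp [mul_comm]
  calc Real.sqrt (∑ i, ‖x i‖ ^ 2) ≤ Real.sqrt ((n : ℝ) * a ^ 2) := Real.sqrt_le_sqrt hs
    _ = a * Real.sqrt n := by
        rw [Real.sqrt_mul (by positivity), Real.sqrt_sq ha]; ring

lemma s17_bounds (n : ℕ) (hn : 2 ≤ n) (p θ : ℝ) (hp : 1 < p) (hθ : 0 < θ) :
    ∃ c C : ℝ≥0∞, 0 < c ∧ C < ⊤ ∧ ∀ r ∈ Set.Ioo (0:ℝ) 1,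
      c * ENNReal.ofReal (r ^ ((n:ℝ) - p * θ)) ≤
        ballEnergy (volume.restrict (cubeP n ∪ cubeN n)) p θ
          ((cubeP n).indicator fun _ => (1:ℝ)) r ∧
      ballEnergy (volume.restrict (cubeP n ∪ cubeN n)) p θ
          ((cubeP n).indicator fun _ => (1:ℝ)) r ≤
        C * ENNReal.ofReal (r ^ ((n:ℝ) - p * θ)) := by
  have hp0 : (0:ℝ) < p := lt_trans one_pos hp
  set E : Type := EuclideanSpace ℝ (Fin n) with hE
  set X : Set (EuclideanSpace ℝ (Fin n)) := cubeP n ∪ cubeN n with hX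
  set u : EuclideanSpace ℝ (Fin n) → ℝ := (cubeP n).indicator fun _ => (1:ℝ) with hu
  set μ : Measure (EuclideanSpace ℝ (Fin n)) := volume.restrict X with hμ
  haveI : Nontrivial (EuclideanSpace ℝ (Fin n)) :=
    Module.nontrivial_of_finrank_pos (R := ℝ)
      (by rw [finrank_euclideanSpace_fin]; omega)
  -- basic measurability
  have hPc : IsClosed (cubeP n) := s17cube_closed n 0 1
  have hNc : IsClosed (cubeN n) := s17cube_closed n (-1) 0
  have hXm : MeasurableSet X := (hPc.union hNc).measurableSet
  -- u values
  have huP : ∀ x, x ∈ cubeP n → u x = 1 := fun x hx => Set.indicator_of_mem hx _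
  have huN : ∀ x, x ∉ cubeP n → u x = 0 := fun x hx => Set.indicator_of_notMem hx _
  -- separation
  have hsep : ∀ x ∈ X, ∀ y ∈ X, u x ≠ u y → ‖x‖ ≤ dist x y := by
    intro x hx y hy hne
    by_cases hxP : x ∈ cubeP n
    · by_cases hyP : y ∈ cubeP n
      · exact absurd (by rw [huP x hxP, huP y hyP]) hne
      · have hyN : y ∈ cubeN n := hy.resolve_left hyP
        exact s17_dist x y fun i => mul_nonpos_of_nonneg_of_nonpos (hxP i).1 (hyN i).2
    · have hxN : x ∈ cubeN n := hx.resolve_left hxP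
      by_cases hyP : y ∈ cubeP n
      · exact s17_dist x y fun i => mul_nonpos_of_nonpos_of_nonneg (hxN i).2 (hyP i).1
      · exact absurd (by rw [huN x hxP, huN y hyP]) hne
  -- volume of unit ball
  set V₁ : ℝ≥0∞ := volume (ball (0:EuclideanSpace ℝ (Fin n)) 1) with hV₁
  have hV₁pos : 0 < V₁ := measure_ball_pos volume 0 one_pos
  have hV₁lt : V₁ < ⊤ := measure_ball_lt_top
  set v : ℝ := V₁.toReal with hv
  have hvpos : 0 < v := ENNReal.toReal_pos hV₁pos.ne' hV₁lt.ne
  have hV₁v : V₁ = ENNReal.ofReal v := (ENNReal.ofReal_toReal hV₁lt.ne).symm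
  have hball : ∀ (x : EuclideanSpace ℝ (Fin n)) (r : ℝ), 0 ≤ r →
      μ (ball x r) ≤ ENNReal.ofReal (r ^ n) * V₁ := by
    intro x r hr
    calc μ (ball x r) = volume (ball x r ∩ X) := Measure.restrict_apply measurableSet_ball
      _ ≤ volume (ball x r) := measure_mono Set.inter_subset_left
      _ = ENNReal.ofReal (r ^ n) * V₁ := by
          rw [Measure.addHaar_ball _ _ hr, finrank_euclideanSpace_fin]
  -- the integrand bound |u x - u y| ≤ 1
  have habs : ∀ x y, ENNReal.ofReal (|u x - u y| ^ p) ≤ 1 := by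
    intro x y
    have h1 : |u x - u y| ≤ 1 := by
      have hx : u x = 0 ∨ u x = 1 := Set.indicator_eq_zero_or_self _ _ x
      have hy : u y = 0 ∨ u y = 1 := Set.indicator_eq_zero_or_self _ _ y
      rcases hx with h | h <;> rcases hy with h' | h' <;> rw [h, h'] <;> norm_num
    calc ENNReal.ofReal (|u x - u y| ^ p) ≤ ENNReal.ofReal 1 :=
        ENNReal.ofReal_le_ofReal (Real.rpow_le_one (abs_nonneg _) h1 hp0.le)
      _ = 1 := ENNReal.ofReal_one
  have hzero : ∀ x y, u x = u y → ENNReal.ofReal (|u x - u y| ^ p) = 0 := by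
    intro x y h
    rw [h, sub_self, abs_zero, Real.zero_rpow hp0.ne', ENNReal.ofReal_zero]
  -- constants
  set K : ℝ := 4 * Real.sqrt n with hKdef
  have hsn : (1:ℝ) ≤ Real.sqrt n := by
    rw [show (1:ℝ) = Real.sqrt 1 from (Real.sqrt_one).symm]
    exact Real.sqrt_le_sqrt (by exact_mod_cast Nat.one_le_of_lt hn)
  have hsnpos : (0:ℝ) < Real.sqrt n := lt_of_lt_of_le one_pos hsn
  have hK1 : (1:ℝ) ≤ K := by nlinarith
  have hKpos : (0:ℝ) < K := lt_of_lt_of_le one_pos hK1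
  set c₀ : ℝ := 1 / (K ^ n * (2*K) ^ n * v) with hc₀
  have hc₀pos : 0 < c₀ := by positivity
  refine ⟨ENNReal.ofReal c₀, V₁, ENNReal.ofReal_pos.mpr hc₀pos, hV₁lt, ?_⟩
  intro r hr
  obtain ⟨hr0, hr1⟩ := hr
  set a : ℝ := r / K with ha
  have ha0 : 0 < a := div_pos hr0 hKpos
  have ha1 : a ≤ 1 := by
    rw [ha, div_le_one hKpos]; linarith
  have haK : a * Real.sqrt n = r / 4 := by
    rw [ha, hKdef]; field_simp
  set Q : Set (EuclideanSpace ℝ (Fin n)) := s17cube n (-a) (-a/2) with hQdef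
  set T : Set (EuclideanSpace ℝ (Fin n)) := s17cube n 0 a with hTdef
  have hQm : MeasurableSet Q := (s17cube_closed n _ _).measurableSet
  have hTm : MeasurableSet T := (s17cube_closed n _ _).measurableSet
  have hQsubN : Q ⊆ cubeN n := by
    intro x hx i
    have := hx i
    constructor <;> [linarith [this.1]; linarith [this.2]]
  have hQnotP : ∀ x ∈ Q, x ∉ cubeP n := by
    intro x hx hxP
    have h1 := (hx ⟨0, by omega⟩).2
    have h2 := (hxP ⟨0, by omega⟩).1
    linarith
  have hQnorm : ∀ x ∈ Q, ‖x‖ ≤ r / 4 := by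
    intro x hx
    rw [← haK]
    refine s17_norm_le a ha0.le x fun i => abs_le.mpr ⟨(hx i).1, by linarith [(hx i).2]⟩
  have hTsubP : T ⊆ cubeP n := by
    intro x hx i
    exact ⟨(hx i).1, le_trans (hx i).2 ha1⟩
  have hTnorm : ∀ y ∈ T, ‖y‖ ≤ r / 4 := by
    intro y hy
    rw [← haK]
    refine s17_norm_le a ha0.le y fun i => abs_le.mpr ⟨by linarith [(hy i).1], (hy i).2⟩
  have hTball : ∀ x ∈ Q, T ⊆ ball x r := by
    intro x hx y hy
    rw [mem_ball, dist_comm, dist_eq_norm]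
    calc ‖x - y‖ ≤ ‖x‖ + ‖y‖ := norm_sub_le x y
      _ ≤ r/4 + r/4 := add_le_add (hQnorm x hx) (hTnorm y hy)
      _ < r := by linarith
  -- the integrand
  set f : EuclideanSpace ℝ (Fin n) → ℝ≥0∞ := fun x =>
    (∫⁻ y in ball x r, ENNReal.ofReal (|u x - u y| ^ p) ∂μ) /
      (μ (ball x r) * ENNReal.ofReal (r ^ (θ * p))) with hfdef
  have hBE : ballEnergy μ p θ u r = ∫⁻ x, f x ∂μ := rfl
  have hrθp : (0:ℝ) < r ^ (θ * p) := Real.rpow_pos_of_pos hr0 _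
  -- pointwise upper bound
  have hf_le : ∀ x, f x ≤ (ENNReal.ofReal (r ^ (θ * p)))⁻¹ := by
    intro x
    have hinner : (∫⁻ y in ball x r, ENNReal.ofReal (|u x - u y| ^ p) ∂μ) ≤ μ (ball x r) := by
      calc (∫⁻ y in ball x r, ENNReal.ofReal (|u x - u y| ^ p) ∂μ)
          ≤ ∫⁻ _ in ball x r, 1 ∂μ := lintegral_mono fun y => habs x y
        _ = μ (ball x r) := setLIntegral_one _
    calc f x ≤ μ (ball x r) / (μ (ball x r) * ENNReal.ofReal (r ^ (θ * p))) :=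
          ENNReal.div_le_div_right hinner _
      _ = μ (ball x r) * ((μ (ball x r))⁻¹ * (ENNReal.ofReal (r ^ (θ * p)))⁻¹) := by
          rw [div_eq_mul_inv, ENNReal.mul_inv (Or.inr ENNReal.ofReal_ne_top)
            (Or.inr (ENNReal.ofReal_pos.mpr hrθp).ne')]
      _ = (μ (ball x r) * (μ (ball x r))⁻¹) * (ENNReal.ofReal (r ^ (θ * p)))⁻¹ :=
          (mul_assoc _ _ _).symm
      _ ≤ 1 * (ENNReal.ofReal (r ^ (θ * p)))⁻¹ :=
          mul_le_mul_left (ENNReal.mul_inv_le_one _) _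
      _ = (ENNReal.ofReal (r ^ (θ * p)))⁻¹ := one_mul _
  -- vanishing far from the origin
  have hf_zero : ∀ x ∈ X, x ∉ ball (0:EuclideanSpace ℝ (Fin n)) r → f x = 0 := by
    intro x hx hxb
    have hxr : r ≤ ‖x‖ := by
      rw [mem_ball, dist_zero_right] at hxb; linarith [not_lt.mp hxb]
    have hinner : (∫⁻ y in ball x r, ENNReal.ofReal (|u x - u y| ^ p) ∂μ) = 0 := by
      have hres : μ.restrict (ball x r) = volume.restrict (ball x r ∩ X) := by
        rw [hμ, Measure.restrict_restrict measurableSet_ball]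
      have hae : ∀ᵐ y ∂(μ.restrict (ball x r)),
          ENNReal.ofReal (|u x - u y| ^ p) = 0 := by
        rw [hres]
        refine (ae_restrict_iff' (measurableSet_ball.inter hXm)).mpr (ae_of_all _ ?_)
        intro y hy
        by_cases hne : u x = u y
        · exact hzero x y hne
        · exact absurd (lt_of_le_of_lt (le_trans hxr (hsep x hx y hy.2 hne))
            (mem_ball'.mp hy.1)) (lt_irrefl r)
      calc (∫⁻ y in ball x r, ENNReal.ofReal (|u x - u y| ^ p) ∂μ)
          = ∫⁻ _ in ball x r, 0 ∂μ := lintegral_congr_ae hae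
        _ = 0 := lintegral_zero
    rw [hfdef]
    simp only [hinner, ENNReal.zero_div]
  -- upper bound
  have hup : ballEnergy μ p θ u r ≤ V₁ * ENNReal.ofReal (r ^ ((n:ℝ) - p * θ)) := by
    rw [hBE]
    calc (∫⁻ x, f x ∂μ)
        ≤ ∫⁻ x, (ball (0:EuclideanSpace ℝ (Fin n)) r).indicator
            (fun _ => (ENNReal.ofReal (r ^ (θ * p)))⁻¹) x ∂μ := by
          refine lintegral_mono_ae ?_
          rw [hμ]
          refine (ae_restrict_iff' hXm).mpr (ae_of_all _ ?_)
          intro x hx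
          by_cases hxb : x ∈ ball (0:EuclideanSpace ℝ (Fin n)) r
          · rw [Set.indicator_of_mem hxb]; exact hf_le x
          · rw [Set.indicator_of_notMem hxb, hf_zero x hx hxb]
      _ = (ENNReal.ofReal (r ^ (θ * p)))⁻¹ * μ (ball 0 r) :=
          lintegral_indicator_const measurableSet_ball _
      _ ≤ (ENNReal.ofReal (r ^ (θ * p)))⁻¹ * (ENNReal.ofReal (r ^ n) * V₁) :=
          mul_le_mul_right (hball 0 r hr0.le) _
      _ = V₁ * ENNReal.ofReal (r ^ ((n:ℝ) - p * θ)) := by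
          rw [← ENNReal.ofReal_inv_of_pos hrθp, ← mul_assoc,
            ← ENNReal.ofReal_mul (by positivity)]
          rw [show ((r ^ (θ * p))⁻¹ * r ^ n : ℝ) = r ^ ((n:ℝ) - p * θ) by
            rw [mul_comm p θ, Real.rpow_sub hr0, Real.rpow_natCast]
            field_simp]
          exact mul_comm _ _
  -- lower bound
  have hQX : Q ⊆ X := fun x hx => Or.inr (hQsubN hx)
  have hvolQ : μ Q = ENNReal.ofReal ((a/2) ^ n) := by
    rw [hμ, Measure.restrict_apply hQm, Set.inter_eq_self_of_subset_left hQX, hQdef,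
      s17cube_vol, show (-a/2 - -a : ℝ) = a/2 by ring, ← ENNReal.ofReal_pow (by positivity)]
  have hvolT : μ T = ENNReal.ofReal (a ^ n) := by
    have hTX : T ⊆ X := fun x hx => Or.inl (hTsubP hx)
    rw [hμ, Measure.restrict_apply hTm, Set.inter_eq_self_of_subset_left hTX, hTdef,
      s17cube_vol, show (a - 0 : ℝ) = a by ring, ← ENNReal.ofReal_pow ha0.le]
  set g : ℝ≥0∞ := ENNReal.ofReal (a ^ n) /
    (ENNReal.ofReal (r ^ n) * V₁ * ENNReal.ofReal (r ^ (θ * p))) with hgdef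
  have hfQ : ∀ x ∈ Q, g ≤ f x := by
    intro x hxQ
    have h1 : ENNReal.ofReal (a ^ n) ≤
        ∫⁻ y in ball x r, ENNReal.ofReal (|u x - u y| ^ p) ∂μ := by
      have heq : ENNReal.ofReal (a ^ n)
          = ∫⁻ y in ball x r, T.indicator (fun _ => (1:ℝ≥0∞)) y ∂μ := by
        rw [lintegral_indicator hTm, setLIntegral_one, Measure.restrict_apply hTm,
          Set.inter_eq_self_of_subset_left (hTball x hxQ), hvolT]
      rw [heq]
      refine lintegral_mono fun y => ?_
      by_cases hyT : y ∈ T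
      · rw [Set.indicator_of_mem hyT]
        rw [huN x (hQnotP x hxQ), huP y (hTsubP hyT)]
        norm_num
      · rw [Set.indicator_of_notMem hyT]; exact zero_le
    have h2 : μ (ball x r) * ENNReal.ofReal (r ^ (θ * p)) ≤
        ENNReal.ofReal (r ^ n) * V₁ * ENNReal.ofReal (r ^ (θ * p)) :=
      mul_le_mul_left (hball x r hr0.le) _
    exact ENNReal.div_le_div h1 h2
  have hlow : ENNReal.ofReal c₀ * ENNReal.ofReal (r ^ ((n:ℝ) - p * θ)) ≤
      ballEnergy μ p θ u r := by
    have he : r ^ ((n:ℝ) - p * θ) = r ^ n / r ^ (θ * p) := by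
      rw [mul_comm p θ, Real.rpow_sub hr0, Real.rpow_natCast]
    have key : c₀ * r ^ ((n:ℝ) - p * θ) = a ^ n / (r ^ n * v * r ^ (θ * p)) * (a/2) ^ n := by
      rw [he, hc₀, ha]
      have hK0 : K ≠ 0 := hKpos.ne'
      field_simp
      ring_nf
      field_simp
      rw [← mul_pow, mul_one_div_cancel hK0, one_pow, one_mul, ← mul_pow]
      norm_num
    have hR : g * μ Q = ENNReal.ofReal (a ^ n / (r ^ n * v * r ^ (θ * p)) * (a/2) ^ n) := by
      rw [hvolQ, hgdef, hV₁v, ← ENNReal.ofReal_mul (by positivity),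
        ← ENNReal.ofReal_mul (by positivity),
        ← ENNReal.ofReal_div_of_pos (by positivity),
        ← ENNReal.ofReal_mul (by positivity)]
    have step1 : ENNReal.ofReal c₀ * ENNReal.ofReal (r ^ ((n:ℝ) - p * θ)) = g * μ Q := by
      rw [← ENNReal.ofReal_mul hc₀pos.le, hR, key]
    rw [hBE, step1]
    calc g * μ Q = ∫⁻ x, Q.indicator (fun _ => g) x ∂μ :=
        (lintegral_indicator_const hQm g).symm
      _ ≤ ∫⁻ x, f x ∂μ := by
          refine lintegral_mono fun x => ?_
          by_cases hxQ : x ∈ Q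
          · rw [Set.indicator_of_mem hxQ]; exact hfQ x hxQ
          · rw [Set.indicator_of_notMem hxQ]; exact zero_le
  exact ⟨hlow, hup⟩

/-- For `X = [0,1]^n ∪ [-1,0]^n` glued at the origin with Lebesgue measure and
`E = [0,1]^n`, the Korevaar–Schoen ball energies of `χ_E` at scale `r` are comparable to
`r^{n-pθ}` for small `r`; consequently `‖χ_E‖_{KS^θ_p(X)} = 0` if `pθ < n`, is positive and
finite if `pθ = n`, and `χ_E ∉ KS^θ_p(X)` if `pθ > n`. -/
theorem statement17 (n : ℕ) (hn : 2 ≤ n) (p θ : ℝ) (hp : 1 < p) (hθ : 0 < θ) :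
    (∃ c C : ℝ≥0∞, 0 < c ∧ C < ⊤ ∧ ∃ r₀ : ℝ, 0 < r₀ ∧ ∀ r ∈ Set.Ioo (0:ℝ) r₀,
      c * ENNReal.ofReal (r ^ ((n:ℝ) - p * θ)) ≤
        ballEnergy (volume.restrict (cubeP n ∪ cubeN n)) p θ
          ((cubeP n).indicator fun _ => (1:ℝ)) r ∧
      ballEnergy (volume.restrict (cubeP n ∪ cubeN n)) p θ
          ((cubeP n).indicator fun _ => (1:ℝ)) r ≤
        C * ENNReal.ofReal (r ^ ((n:ℝ) - p * θ))) ∧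
    (p * θ < n → ksEnergy (volume.restrict (cubeP n ∪ cubeN n)) p θ
      ((cubeP n).indicator fun _ => (1:ℝ)) = 0) ∧
    (p * θ = n → 0 < ksEnergy (volume.restrict (cubeP n ∪ cubeN n)) p θ
        ((cubeP n).indicator fun _ => (1:ℝ)) ∧
      ksEnergy (volume.restrict (cubeP n ∪ cubeN n)) p θ
        ((cubeP n).indicator fun _ => (1:ℝ)) < ⊤) ∧
    ((n:ℝ) < p * θ → ksEnergy (volume.restrict (cubeP n ∪ cubeN n)) p θ
      ((cubeP n).indicator fun _ => (1:ℝ)) = ⊤) := by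
  obtain ⟨c, C, hc, hC, hbnd⟩ := s17_bounds n hn p θ hp hθ
  set B : ℝ → ℝ≥0∞ := ballEnergy (volume.restrict (cubeP n ∪ cubeN n)) p θ
    ((cubeP n).indicator fun _ => (1:ℝ)) with hBdef
  have hks : ksEnergy (volume.restrict (cubeP n ∪ cubeN n)) p θ
      ((cubeP n).indicator fun _ => (1:ℝ)) = limsup B (𝓝[>] (0:ℝ)) := rfl
  have hev : ∀ᶠ r in 𝓝[>] (0:ℝ), r ∈ Set.Ioo (0:ℝ) 1 :=
    Filter.eventually_of_mem (Ioo_mem_nhdsGT_of_mem ⟨le_refl 0, one_pos⟩) fun r hr => hr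
  refine ⟨⟨c, C, hc, hC, 1, one_pos, hbnd⟩, ?_, ?_, ?_⟩
  · -- p θ < n
    intro h
    have he : (0:ℝ) < (n:ℝ) - p * θ := sub_pos.mpr h
    have h1 : Tendsto (fun r : ℝ => r ^ ((n:ℝ) - p * θ)) (𝓝[>] (0:ℝ)) (𝓝 0) := by
      have h0 := (Real.continuousAt_rpow_const 0 ((n:ℝ) - p * θ) (Or.inr he.le)).tendsto
      rw [Real.zero_rpow he.ne'] at h0
      exact h0.mono_left nhdsWithin_le_nhds
    have h2 : Tendsto (fun r : ℝ => ENNReal.ofReal (r ^ ((n:ℝ) - p * θ))) (𝓝[>] (0:ℝ)) (𝓝 0) := by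
      simpa using ENNReal.tendsto_ofReal h1
    have htend : Tendsto (fun r : ℝ => C * ENNReal.ofReal (r ^ ((n:ℝ) - p * θ)))
        (𝓝[>] (0:ℝ)) (𝓝 0) := by
      simpa using ENNReal.Tendsto.const_mul h2 (Or.inr hC.ne)
    have hB : Tendsto B (𝓝[>] (0:ℝ)) (𝓝 0) := by
      refine tendsto_of_tendsto_of_tendsto_of_le_of_le' tendsto_const_nhds htend
        (Eventually.of_forall fun r => zero_le) (hev.mono fun r hr => (hbnd r hr).2)
    rw [hks]
    exact hB.limsup_eq
  · -- p θ = n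
    intro h
    have hee : (n:ℝ) - p * θ = 0 := by rw [h]; ring
    have hone : ∀ r : ℝ, ENNReal.ofReal (r ^ ((n:ℝ) - p * θ)) = 1 := by
      intro r; rw [hee, Real.rpow_zero, ENNReal.ofReal_one]
    rw [hks]
    constructor
    · refine lt_of_lt_of_le hc (Filter.le_limsup_of_frequently_le ?_)
      refine (hev.mono fun r hr => ?_).frequently
      have h1 := (hbnd r hr).1
      rwa [hone r, mul_one] at h1
    · refine lt_of_le_of_lt (Filter.limsup_le_of_le ?_ ?_) hC
      · isBoundedDefault
      · refine hev.mono fun r hr => ?_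
        have h1 := (hbnd r hr).2
        rwa [hone r, mul_one] at h1
  · -- n < p θ
    intro h
    have he : (n:ℝ) - p * θ < 0 := by linarith
    have h1 : Tendsto (fun r : ℝ => r ^ ((n:ℝ) - p * θ)) (𝓝[>] (0:ℝ)) atTop := by
      have h2 : Tendsto (fun x : ℝ => (x⁻¹) ^ (-((n:ℝ) - p * θ))) (𝓝[>] (0:ℝ)) atTop :=
        (tendsto_rpow_atTop (by linarith)).comp tendsto_inv_nhdsGT_zero
      refine h2.congr' ?_
      filter_upwards [self_mem_nhdsWithin] with x hx
      have hx0 : (0:ℝ) < x := hx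
      rw [Real.inv_rpow hx0.le, Real.rpow_neg hx0.le, inv_inv]
    have h3 : Tendsto (fun r : ℝ => ENNReal.ofReal (r ^ ((n:ℝ) - p * θ))) (𝓝[>] (0:ℝ)) (𝓝 ⊤) :=
      ENNReal.tendsto_ofReal_atTop.comp h1
    have h4 : Tendsto (fun r : ℝ => c * ENNReal.ofReal (r ^ ((n:ℝ) - p * θ)))
        (𝓝[>] (0:ℝ)) (𝓝 ⊤) := by
      have := ENNReal.Tendsto.const_mul (a := c) h3 (Or.inl (by simp))
      rwa [ENNReal.mul_top hc.ne'] at this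
    have hB : Tendsto B (𝓝[>] (0:ℝ)) (𝓝 ⊤) :=
      tendsto_nhds_top_mono h4 (hev.mono fun r hr => (hbnd r hr).1)
    rw [hks]
    exact hB.limsup_eq
end
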